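/- arXiv:2505.18833 — 4 statements merged into one kernel-verified Lean document; each statement's English description precedes it below -/
import Mathlib

section
/- For every automaton-controller π^A and every initial state x₀ ∈ X, the following inequality between probabilities holds: d^∞({ω : ℕ → W | the word L ∘ traj(x₀,ω) is accepted by the Büchi automaton}) ≥ d^∞({ω : ℕ → W | the product trajectory (x_t, q_t) from (x₀, q_init) under π^A and ω satisfies q_t ∈ Acc for infinitely many t}). -/
open MeasureTheory

/-- The trajectory of the closed-loop dynamics `F` from initial state `x₀`
under the disturbance sequence `ω`. -/
def traj {X W : Type*} (F : X × W → X) (x₀ : X) (ω : ℕ → W) : ℕ → X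
  | 0 => x₀
  | t + 1 => F (traj F x₀ ω t, ω t)

/-- Büchi acceptance of an infinite word `σ` by the automaton
`(Q, qinit, Δ, Acc)`. -/
def Accepts {Q A : Type*} (qinit : Q) (Δ : Q → A → Set Q) (Acc : Set Q)
    (σ : ℕ → A) : Prop :=
  ∃ ρ : ℕ → Q, ρ 0 = qinit ∧ (∀ t, ρ (t + 1) ∈ Δ (ρ t) (σ t)) ∧
    {t | ρ t ∈ Acc}.Infinite

/-- The product trajectory `(x_t, q_t)` from `(x₀, qinit)` under the
automaton-controller `πA` and disturbance sequence `ω`. -/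
def prodTraj {X W Q : Type*} (F : X × W → X) (πA : X × Q → Q)
    (x₀ : X) (qinit : Q) (ω : ℕ → W) : ℕ → X × Q
  | 0 => (x₀, qinit)
  | t + 1 =>
      (F ((prodTraj F πA x₀ qinit ω t).1, ω t), πA (prodTraj F πA x₀ qinit ω t))

lemma prodTraj_fst {X W Q : Type*} (F : X × W → X) (πA : X × Q → Q)
    (x₀ : X) (qinit : Q) (ω : ℕ → W) :
    ∀ t, (prodTraj F πA x₀ qinit ω t).1 = traj F x₀ ω t := by
  intro t
  induction t with
  | zero => rfl
  | succ t ih => simp [prodTraj, traj, ih]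

/-- For every automaton-controller `πA` and every initial state
`x₀`, the probability (under the i.i.d. product measure `dInf` of countably
many copies of `d`) that the word `L ∘ traj F x₀ ω` is accepted by the Büchi
automaton is at least the probability that the product trajectory visits
`Acc` (in its automaton component) infinitely many times. -/
theorem buchi_product_probability_le
    {X W Q A : Type*}
    [MeasurableSpace X] [MeasurableSpace W]
    [Fintype Q] [MeasurableSpace Q] [DiscreteMeasurableSpace Q]
    [Fintype A] [MeasurableSpace A] [DiscreteMeasurableSpace A]
    (d : Measure W) [IsProbabilityMeasure d]
    (dInf : Measure (ℕ → W)) [IsProbabilityMeasure dInf]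
    (hdInf : ∀ (n : ℕ) (s : ℕ → Set W), (∀ i, MeasurableSet (s i)) →
      dInf {ω | ∀ i < n, ω i ∈ s i} = ∏ i ∈ Finset.range n, d (s i))
    (F : X × W → X) (hF : Measurable F)
    (qinit : Q) (Δ : Q → A → Set Q) (hΔ : ∀ q σ, (Δ q σ).Nonempty)
    (Acc : Set Q)
    (L : X → A) (hL : Measurable L)
    (πA : X × Q → Q) (hπA : Measurable πA)
    (hπAΔ : ∀ x q, πA (x, q) ∈ Δ q (L x))
    (x₀ : X) :
    dInf {ω | {t | (prodTraj F πA x₀ qinit ω t).2 ∈ Acc}.Infinite} ≤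
      dInf {ω | Accepts qinit Δ Acc (L ∘ traj F x₀ ω)} := by
  apply measure_mono
  intro ω hω
  refine ⟨fun t => (prodTraj F πA x₀ qinit ω t).2, rfl, fun t => ?_, hω⟩
  have h1 : (prodTraj F πA x₀ qinit ω (t + 1)).2
      = πA ((prodTraj F πA x₀ qinit ω t).1, (prodTraj F πA x₀ qinit ω t).2) := rfl
  simp only [Function.comp_apply]
  rw [h1, prodTraj_fst]
  exact hπAΔ _ _
end

section
/- Soundness of limit-deterministic Büchi supermartingale certificates: assume the LDBSM conditions (a)–(f) hold, and let p be a real number with 0 ≤ p ≤ 1 − exp(8·η^S·ε^S/(M^S)²). Then there exists an automaton-controller π^A such that for every x₀ ∈ Init, d^∞({ω : ℕ → W | the word L ∘ traj(x₀,ω) is accepted by the Büchi automaton}) ≥ d^∞({ω : ℕ → W | the product trajectory (x_t, q_t) from (x₀, q_init) under π^A and ω satisfies q_t ∈ Acc for infinitely many t}) ≥ p. -/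
open MeasureTheory

set_option maxHeartbeats 1000000
section LDBSMaux
namespace LDBSM
open Real ENNReal


noncomputable def hgf (q h : ℝ) : ℝ := 1 - q + q * Real.exp h

lemma hgf_pos {q : ℝ} (hq0 : 0 ≤ q) (hq1 : q ≤ 1) (h : ℝ) : 0 < hgf q h := by
  rcases hq0.lt_or_eq with hq | hq
  · have : 0 < q * Real.exp h := mul_pos hq (Real.exp_pos h)
    have : 0 ≤ 1 - q := by linarith
    unfold hgf; nlinarith [Real.exp_pos h]
  · simp [hgf, ← hq]

noncomputable def psif (q h : ℝ) : ℝ := q + h / 4 - q * Real.exp h / hgf q h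

noncomputable def phif (q h : ℝ) : ℝ := q * h + h ^ 2 / 8 - Real.log (hgf q h)

lemma hasDerivAt_hgf (q h : ℝ) : HasDerivAt (hgf q) (q * Real.exp h) h := by
  have h1 : HasDerivAt (fun h : ℝ => q * Real.exp h) (q * Real.exp h) h :=
    (Real.hasDerivAt_exp h).const_mul q
  have h2 : HasDerivAt (fun h : ℝ => 1 - q + q * Real.exp h) (0 + q * Real.exp h) h :=
    (hasDerivAt_const h (1 - q)).add h1
  exact h2.congr_deriv (zero_add _)

lemma hasDerivAt_phif {q : ℝ} (hq0 : 0 ≤ q) (hq1 : q ≤ 1) (h : ℝ) :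
    HasDerivAt (phif q) (psif q h) h := by
  have hg := hasDerivAt_hgf q h
  have hlog : HasDerivAt (fun h => Real.log (hgf q h)) (q * Real.exp h / hgf q h) h :=
    hg.log (hgf_pos hq0 hq1 h).ne'
  have h1 : HasDerivAt (fun h : ℝ => q * h) q h := by
    simpa using (hasDerivAt_id h).const_mul q
  have h2 : HasDerivAt (fun h : ℝ => h ^ 2 / 8) (h / 4) h := by
    have := (hasDerivAt_pow 2 h).div_const 8
    exact this.congr_deriv (by ring)
  have := (h1.add h2).sub hlog
  unfold phif psif
  exact this

lemma hasDerivAt_psif {q : ℝ} (hq0 : 0 ≤ q) (hq1 : q ≤ 1) (h : ℝ) :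
    HasDerivAt (psif q)
      (1 / 4 - (q * Real.exp h * hgf q h - q * Real.exp h * (q * Real.exp h)) / (hgf q h) ^ 2)
      h := by
  have hg := hasDerivAt_hgf q h
  have hn : HasDerivAt (fun h : ℝ => q * Real.exp h) (q * Real.exp h) h :=
    (Real.hasDerivAt_exp h).const_mul q
  have hdiv := hn.div hg (hgf_pos hq0 hq1 h).ne'
  have h1 : HasDerivAt (fun h : ℝ => q + h / 4) (1 / 4) h := by
    have : HasDerivAt (fun h : ℝ => h / 4) (1 / 4) h := (hasDerivAt_id h).div_const 4
    exact (hasDerivAt_const h q).add this |>.congr_deriv (by ring)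
  exact h1.sub hdiv

lemma deriv_psif_nonneg {q : ℝ} (hq0 : 0 ≤ q) (hq1 : q ≤ 1) (h : ℝ) :
    0 ≤ 1 / 4 - (q * Real.exp h * hgf q h - q * Real.exp h * (q * Real.exp h)) / (hgf q h) ^ 2 := by
  set u := q * Real.exp h with hu
  have hu0 : 0 ≤ u := mul_nonneg hq0 (Real.exp_pos h).le
  have hg : hgf q h = (1 - q) + u := by simp [hgf, hu]
  have hgpos := hgf_pos hq0 hq1 h
  have key : u * hgf q h - u * u = u * (1 - q) := by rw [hg]; ring
  rw [key]
  have h4 : 4 * (u * (1 - q)) ≤ ((1 - q) + u) ^ 2 := by nlinarith [sq_nonneg ((1 - q) - u)]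
  have : u * (1 - q) / (hgf q h) ^ 2 ≤ 1 / 4 := by
    rw [div_le_iff₀ (by positivity)]
    rw [hg]; nlinarith
  linarith

lemma psif_zero {q : ℝ} : psif q 0 = 0 := by
  simp [psif, hgf]

lemma phif_zero {q : ℝ} : phif q 0 = 0 := by
  simp [phif, hgf]

lemma phif_nonneg {q : ℝ} (hq0 : 0 ≤ q) (hq1 : q ≤ 1) (h : ℝ) : 0 ≤ phif q h := by
  have hdiffψ : Differentiable ℝ (psif q) := fun x => (hasDerivAt_psif hq0 hq1 x).differentiableAt
  have hψmono : Monotone (psif q) := by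
    apply monotone_of_deriv_nonneg hdiffψ
    intro x
    rw [(hasDerivAt_psif hq0 hq1 x).deriv]
    exact deriv_psif_nonneg hq0 hq1 x
  have hdiffφ : Differentiable ℝ (phif q) := fun x => (hasDerivAt_phif hq0 hq1 x).differentiableAt
  have hderiv : ∀ x, deriv (phif q) x = psif q x := fun x => (hasDerivAt_phif hq0 hq1 x).deriv
  rcases le_total 0 h with hh | hh
  · have hmono : MonotoneOn (phif q) (Set.Ici 0) := by
      apply monotoneOn_of_deriv_nonneg (convex_Ici 0) hdiffφ.continuous.continuousOn
        hdiffφ.differentiableOn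
      intro x hx
      rw [hderiv]
      have : (0:ℝ) ≤ x := by
        simpa using (interior_subset hx : x ∈ Set.Ici (0:ℝ))
      calc (0:ℝ) = psif q 0 := psif_zero.symm
        _ ≤ psif q x := hψmono this
    have := hmono (Set.self_mem_Ici) (Set.mem_Ici.2 hh) hh
    rwa [phif_zero] at this
  · have hanti : AntitoneOn (phif q) (Set.Iic 0) := by
      apply antitoneOn_of_deriv_nonpos (convex_Iic 0) hdiffφ.continuous.continuousOn
        hdiffφ.differentiableOn
      intro x hx
      rw [hderiv]
      have : x ≤ (0:ℝ) := by
        simpa using (interior_subset hx : x ∈ Set.Iic (0:ℝ))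
      calc psif q x ≤ psif q 0 := hψmono this
        _ = 0 := psif_zero
    have := hanti (Set.mem_Iic.2 hh) Set.self_mem_Iic hh
    rwa [phif_zero] at this

lemma hgf_le_exp {q : ℝ} (hq0 : 0 ≤ q) (hq1 : q ≤ 1) (h : ℝ) :
    hgf q h ≤ Real.exp (q * h + h ^ 2 / 8) := by
  have h1 := phif_nonneg hq0 hq1 h
  have h2 : Real.log (hgf q h) ≤ q * h + h ^ 2 / 8 := by unfold phif at h1; linarith
  calc hgf q h = Real.exp (Real.log (hgf q h)) := (Real.exp_log (hgf_pos hq0 hq1 h)).symm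
    _ ≤ _ := Real.exp_le_exp.2 h2



lemma hgf_le_exp' {q : ℝ} (hq0 : 0 ≤ q) (hq1 : q ≤ 1) (h : ℝ) :
    1 - q + q * Real.exp h ≤ Real.exp (q * h + h ^ 2 / 8) := by
  have := hgf_le_exp hq0 hq1 h
  simpa [hgf] using this

/-- Hoeffding's lemma. -/
lemma hoeffding_lemma {W : Type*} [MeasurableSpace W] (μ : Measure W) [IsProbabilityMeasure μ]
    (f : W → ℝ) (hf : Measurable f) (a b t : ℝ) (hab : a < b) (ht : 0 ≤ t)
    (hbd : ∀ᵐ w ∂μ, a ≤ f w ∧ f w ≤ b) :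
    ∫ w, Real.exp (t * f w) ∂μ ≤ Real.exp (t * ∫ w, f w ∂μ + t ^ 2 * (b - a) ^ 2 / 8) := by
  have hfi : Integrable f μ := by
    refine Integrable.mono' (integrable_const (max |a| |b|)) hf.aestronglyMeasurable ?_
    filter_upwards [hbd] with w hw
    rw [Real.norm_eq_abs, abs_le]
    constructor
    · calc -(max |a| |b|) ≤ -|a| := by simp
        _ ≤ a := neg_abs_le a
        _ ≤ f w := hw.1
    · calc f w ≤ b := hw.2
        _ ≤ |b| := le_abs_self b
        _ ≤ max |a| |b| := le_max_right _ _
  set m := ∫ w, f w ∂μ with hm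
  have hma : a ≤ m := by
    have : ∫ _w, a ∂μ ≤ ∫ w, f w ∂μ :=
      integral_mono_ae (integrable_const a) hfi (hbd.mono fun w hw => hw.1)
    simpa using this
  have hmb : m ≤ b := by
    have : ∫ w, f w ∂μ ≤ ∫ _w, b ∂μ :=
      integral_mono_ae hfi (integrable_const b) (hbd.mono fun w hw => hw.2)
    simpa using this
  have hba : 0 < b - a := by linarith
  -- pointwise convexity bound
  have hptw : ∀ᵐ w ∂μ, Real.exp (t * f w) ≤
      ((b - f w) / (b - a)) * Real.exp (t * a) + ((f w - a) / (b - a)) * Real.exp (t * b) := by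
    filter_upwards [hbd] with w hw
    have hθ0 : 0 ≤ (b - f w) / (b - a) := div_nonneg (by linarith [hw.2]) hba.le
    have hθ1 : 0 ≤ (f w - a) / (b - a) := div_nonneg (by linarith [hw.1]) hba.le
    have hθs : (b - f w) / (b - a) + (f w - a) / (b - a) = 1 := by
      field_simp; ring
    have := convexOn_exp.2 (Set.mem_univ (t * a)) (Set.mem_univ (t * b)) hθ0 hθ1 hθs
    have harg : (b - f w) / (b - a) * (t * a) + (f w - a) / (b - a) * (t * b) = t * f w := by
      field_simp; ring
    simp only [smul_eq_mul] at this
    rw [harg] at this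
    exact this
  -- integrability of exp (t * f)
  have hexpint : Integrable (fun w => Real.exp (t * f w)) μ := by
    refine Integrable.mono' (integrable_const (Real.exp (t * b)))
      (hf.const_mul t).exp.aestronglyMeasurable ?_
    filter_upwards [hbd] with w hw
    rw [Real.norm_eq_abs, abs_of_nonneg (Real.exp_pos _).le]
    exact Real.exp_le_exp.2 (mul_le_mul_of_nonneg_left hw.2 ht)
  have hrhsint : Integrable
      (fun w => ((b - f w) / (b - a)) * Real.exp (t * a) + ((f w - a) / (b - a)) * Real.exp (t * b)) μ := by
    apply Integrable.add
    · exact ((((integrable_const b).sub hfi).div_const (b - a)).mul_const _)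
    · exact (((hfi.sub (integrable_const a)).div_const (b - a)).mul_const _)
  have hint := integral_mono_ae hexpint hrhsint hptw
  have e1 : ∫ w, ((b - f w) / (b - a)) * Real.exp (t * a) ∂μ
      = ((b - m) / (b - a)) * Real.exp (t * a) := by
    rw [integral_mul_const, integral_div, integral_sub (integrable_const b) hfi]
    simp [hm]
  have e2 : ∫ w, ((f w - a) / (b - a)) * Real.exp (t * b) ∂μ
      = ((m - a) / (b - a)) * Real.exp (t * b) := by
    rw [integral_mul_const, integral_div, integral_sub hfi (integrable_const a)]
    simp [hm]
  have hrhs : ∫ w, (((b - f w) / (b - a)) * Real.exp (t * a) + ((f w - a) / (b - a)) * Real.exp (t * b)) ∂μ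
      = ((b - m) / (b - a)) * Real.exp (t * a) + ((m - a) / (b - a)) * Real.exp (t * b) := by
    have i1 : Integrable (fun w => (b - f w) / (b - a) * Real.exp (t * a)) μ := by
      exact (((integrable_const b).sub hfi).div_const _).mul_const _
    have i2 : Integrable (fun w => (f w - a) / (b - a) * Real.exp (t * b)) μ := by
      exact ((hfi.sub (integrable_const a)).div_const _).mul_const _
    rw [integral_add i1 i2, e1, e2]
  rw [hrhs] at hint
  -- now apply the analytic bound
  set p := (m - a) / (b - a) with hp
  have hp0 : 0 ≤ p := div_nonneg (by linarith) hba.le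
  have hp1 : p ≤ 1 := by
    rw [hp, div_le_one hba]; linarith
  have h1p : (b - m) / (b - a) = 1 - p := by rw [hp]; field_simp; ring
  have hexpb : Real.exp (t * b) = Real.exp (t * a) * Real.exp (t * (b - a)) := by
    rw [← Real.exp_add]; ring_nf
  have key : ((b - m) / (b - a)) * Real.exp (t * a) + ((m - a) / (b - a)) * Real.exp (t * b)
      = Real.exp (t * a) * (1 - p + p * Real.exp (t * (b - a))) := by
    rw [h1p, ← hp, hexpb]; ring
  rw [key] at hint
  have hbound := hgf_le_exp' hp0 hp1 (t * (b - a))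
  calc ∫ w, Real.exp (t * f w) ∂μ
      ≤ Real.exp (t * a) * (1 - p + p * Real.exp (t * (b - a))) := hint
    _ ≤ Real.exp (t * a) * Real.exp (p * (t * (b - a)) + (t * (b - a)) ^ 2 / 8) := by
        apply mul_le_mul_of_nonneg_left hbound (Real.exp_pos _).le
    _ = Real.exp (t * a + p * (t * (b - a)) + (t * (b - a)) ^ 2 / 8) := by
        rw [← Real.exp_add]; ring_nf
    _ ≤ Real.exp (t * m + t ^ 2 * (b - a) ^ 2 / 8) := by
        apply Real.exp_le_exp.2
        have : p * (t * (b - a)) = t * (m - a) := by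
          rw [hp]; field_simp
        rw [this]
        have : (t * (b - a)) ^ 2 / 8 = t ^ 2 * (b - a) ^ 2 / 8 := by ring
        rw [this]; nlinarith



variable {W : Type*} [MeasurableSpace W]

lemma nonempty_of_prob (d : Measure W) [IsProbabilityMeasure d] : Nonempty W := by
  by_contra h
  rw [not_nonempty_iff] at h
  have h1 : d Set.univ = 1 := measure_univ
  rw [Set.univ_eq_empty_iff.2 h] at h1
  simp at h1

lemma measurable_projW (m : ℕ) : Measurable (fun (ω : ℕ → W) (i : Fin m) => ω i) :=
  measurable_pi_lambda _ (fun i => measurable_pi_apply (i : ℕ))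

lemma marginal_eq (d : Measure W) [IsProbabilityMeasure d]
    (dInf : Measure (ℕ → W)) [IsProbabilityMeasure dInf]
    (hdInf : ∀ (n : ℕ) (s : ℕ → Set W), (∀ i, MeasurableSet (s i)) →
      dInf {ω | ∀ i < n, ω i ∈ s i} = ∏ i ∈ Finset.range n, d (s i))
    (m : ℕ) :
    Measure.map (fun (ω : ℕ → W) (i : Fin m) => ω i) dInf
      = Measure.pi (fun _ : Fin m => d) := by
  symm
  apply Measure.pi_eq
  intro s hs
  rw [Measure.map_apply (measurable_projW m) (MeasurableSet.univ_pi hs)]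
  classical
  set s' : ℕ → Set W := fun i => if h : i < m then s ⟨i, h⟩ else Set.univ with hs'
  have hpre : (fun (ω : ℕ → W) (i : Fin m) => ω i) ⁻¹' (Set.univ.pi s)
      = {ω | ∀ i < m, ω i ∈ s' i} := by
    ext ω
    simp only [Set.mem_preimage, Set.mem_pi, Set.mem_univ, forall_true_left, Set.mem_setOf_eq]
    constructor
    · intro h i hi
      simp only [hs', dif_pos hi]
      exact h ⟨i, hi⟩
    · intro h i
      have := h i i.isLt
      simpa only [hs', dif_pos i.isLt] using this
  rw [hpre, hdInf m s' (fun i => by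
    by_cases h : i < m
    · simpa only [hs', dif_pos h] using hs _
    · simpa only [hs', dif_neg h] using MeasurableSet.univ)]
  rw [← Fin.prod_univ_eq_prod_range (fun i => d (s' i)) m]
  apply Finset.prod_congr rfl
  intro i _
  simp only [hs', dif_pos i.isLt]

lemma measurable_snocW (n : ℕ) :
    Measurable (fun p : (Fin n → W) × W => (Fin.snoc p.1 p.2 : Fin (n + 1) → W)) := by
  apply measurable_pi_lambda
  intro i
  refine Fin.lastCases ?_ ?_ i
  · simp only [Fin.snoc_last]
    exact measurable_snd
  · intro j
    simp only [Fin.snoc_castSucc]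
    exact (measurable_pi_apply j).comp measurable_fst

/-- One-step Fubini for `dInf` at coordinate `n`, for functions depending only on
coordinates `≤ n`. -/
lemma key_lintegral (d : Measure W) [IsProbabilityMeasure d]
    (dInf : Measure (ℕ → W)) [IsProbabilityMeasure dInf]
    (hdInf : ∀ (n : ℕ) (s : ℕ → Set W), (∀ i, MeasurableSet (s i)) →
      dInf {ω | ∀ i < n, ω i ∈ s i} = ∏ i ∈ Finset.range n, d (s i))
    (n : ℕ) (f : (ℕ → W) → ℝ≥0∞) (hf : Measurable f)
    (hdep : ∀ ω ω' : ℕ → W, (∀ i ≤ n, ω i = ω' i) → f ω = f ω') :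
    ∫⁻ ω, f ω ∂dInf = ∫⁻ ω, ∫⁻ w, f (Function.update ω n w) ∂d ∂dInf := by
  classical
  obtain ⟨w₀⟩ := nonempty_of_prob d
  set ext : (Fin (n + 1) → W) → ℕ → W := fun y i => if h : i < n + 1 then y ⟨i, h⟩ else w₀
    with hext
  have hextm : Measurable ext := by
    apply measurable_pi_lambda
    intro i
    by_cases h : i < n + 1
    · simp only [hext, dif_pos h]
      exact measurable_pi_apply _
    · simp only [hext, dif_neg h]
      exact measurable_const
  set g : (Fin (n + 1) → W) → ℝ≥0∞ := f ∘ ext with hg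
  have hgm : Measurable g := hf.comp hextm
  have hfg : ∀ ω : ℕ → W, f ω = g (fun i : Fin (n + 1) => ω i) := by
    intro ω
    apply hdep
    intro i hi
    have h : i < n + 1 := Nat.lt_succ_of_le hi
    simp [hg, hext, h]
    intro h'; omega
  -- the two-variable version
  set g₂ : (Fin n → W) × W → ℝ≥0∞ := fun p => g (Fin.snoc p.1 p.2) with hg₂
  have hg₂m : Measurable g₂ := hgm.comp (measurable_snocW n)
  have hsnoc_proj : ∀ (ω : ℕ → W) (w : W),
      (fun i : Fin (n + 1) => Function.update ω n w i)
        = Fin.snoc (fun i : Fin n => ω i) w := by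
    intro ω w
    funext i
    refine Fin.lastCases ?_ ?_ i
    · simp [Fin.snoc_last, Fin.val_last, Function.update_self]
    · intro j
      have hj : (j : ℕ) ≠ n := Nat.ne_of_lt j.isLt
      simp [Fin.snoc_castSucc, Function.update_of_ne hj]
  -- LHS computation
  have hL : ∫⁻ ω, f ω ∂dInf = ∫⁻ y, g y ∂(Measure.pi (fun _ : Fin (n + 1) => d)) := by
    rw [← marginal_eq d dInf hdInf (n + 1), lintegral_map hgm (measurable_projW (n + 1))]
    exact lintegral_congr fun ω => hfg ω
  have MP := measurePreserving_piFinSuccAbove (fun _ : Fin (n + 1) => d) (Fin.last n)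
  have hL2 : ∫⁻ y, g y ∂(Measure.pi (fun _ : Fin (n + 1) => d))
      = ∫⁻ z : W × (Fin n → W), g₂ (z.2, z.1)
          ∂(d.prod (Measure.pi (fun _ : Fin n => d))) := by
    rw [← (MeasurePreserving.symm _ MP).lintegral_comp hgm]
    apply lintegral_congr
    intro z
    congr 1
    have hz : (MeasurableEquiv.piFinSuccAbove (fun _ : Fin (n + 1) => W) (Fin.last n)).symm z
        = Fin.insertNth (Fin.last n) z.1 z.2 := rfl
    rw [hz, Fin.insertNth_last']
  have hL3 : ∫⁻ z : W × (Fin n → W), g₂ (z.2, z.1)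
          ∂(d.prod (Measure.pi (fun _ : Fin n => d)))
      = ∫⁻ y, ∫⁻ w, g₂ (y, w) ∂d ∂(Measure.pi (fun _ : Fin n => d)) := by
    exact lintegral_prod_symm' _ (hg₂m.comp (measurable_snd.prodMk measurable_fst))
  have hhm : Measurable (fun y : Fin n → W => ∫⁻ w, g₂ (y, w) ∂d) :=
    Measurable.lintegral_prod_right' hg₂m
  have hL4 : ∫⁻ y, ∫⁻ w, g₂ (y, w) ∂d ∂(Measure.pi (fun _ : Fin n => d))
      = ∫⁻ ω, ∫⁻ w, g₂ (fun i : Fin n => ω i, w) ∂d ∂dInf := by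
    rw [← marginal_eq d dInf hdInf n, lintegral_map hhm (measurable_projW n)]
  have hfinal : ∀ ω : ℕ → W,
      ∫⁻ w, g₂ (fun i : Fin n => ω i, w) ∂d = ∫⁻ w, f (Function.update ω n w) ∂d := by
    intro ω
    apply lintegral_congr
    intro w
    rw [hfg (Function.update ω n w), hsnoc_proj ω w]
  rw [hL, hL2, hL3, hL4]
  exact lintegral_congr hfinal



variable {W : Type*} [MeasurableSpace W] (d : Measure W) [IsProbabilityMeasure d]

lemma exp_mul_integrable (g : W → ℝ) (hg : Measurable g) (c βS MS lam : ℝ) (hlam : 0 ≤ lam)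
    (hbd : ∀ᵐ w ∂d, βS ≤ c - g w ∧ c - g w ≤ βS + MS) :
    Integrable (fun w => Real.exp (lam * g w)) d := by
  refine Integrable.mono' (integrable_const (Real.exp (lam * (c - βS))))
    ((hg.const_mul lam).exp.aestronglyMeasurable) ?_
  filter_upwards [hbd] with w hw
  rw [Real.norm_eq_abs, abs_of_nonneg (Real.exp_pos _).le]
  apply Real.exp_le_exp.2
  apply mul_le_mul_of_nonneg_left _ hlam
  linarith [hw.1]

/-- The exponential supermartingale fiber bound, via Hoeffding's lemma. -/
lemma fiber_exp (g : W → ℝ) (hg : Measurable g) (hint : Integrable g d)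
    (c βS MS εS : ℝ) (hMS : 0 < MS) (hεS : 0 < εS)
    (hbd : ∀ᵐ w ∂d, βS ≤ c - g w ∧ c - g w ≤ βS + MS)
    (hmean : ∫ w, g w ∂d ≤ c - εS) :
    ∫ w, Real.exp ((8 * εS / MS ^ 2) * g w) ∂d ≤ Real.exp ((8 * εS / MS ^ 2) * c) := by
  set lam := 8 * εS / MS ^ 2 with hlam
  have hlam0 : 0 < lam := by positivity
  have hbd' : ∀ᵐ w ∂d, (c - βS - MS) ≤ g w ∧ g w ≤ c - βS := by
    filter_upwards [hbd] with w hw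
    constructor <;> linarith [hw.1, hw.2]
  have hab : c - βS - MS < c - βS := by linarith
  have h1 := hoeffding_lemma d g hg (c - βS - MS) (c - βS) lam hab hlam0.le hbd'
  refine h1.trans ?_
  apply Real.exp_le_exp.2
  have hsub : (c - βS - (c - βS - MS)) = MS := by ring
  rw [hsub]
  have h2 : lam * ∫ w, g w ∂d ≤ lam * (c - εS) :=
    mul_le_mul_of_nonneg_left hmean hlam0.le
  have h3 : lam * (c - εS) + lam ^ 2 * MS ^ 2 / 8 = lam * c := by
    rw [hlam]
    field_simp
    ring
  linarith

/-- lintegral version. -/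
lemma fiber_exp_lintegral (g : W → ℝ) (hg : Measurable g) (hint : Integrable g d)
    (c βS MS εS : ℝ) (hMS : 0 < MS) (hεS : 0 < εS)
    (hbd : ∀ᵐ w ∂d, βS ≤ c - g w ∧ c - g w ≤ βS + MS)
    (hmean : ∫ w, g w ∂d ≤ c - εS) :
    ∫⁻ w, ENNReal.ofReal (Real.exp ((8 * εS / MS ^ 2) * g w)) ∂d
      ≤ ENNReal.ofReal (Real.exp ((8 * εS / MS ^ 2) * c)) := by
  rw [← ofReal_integral_eq_lintegral_ofReal
    (exp_mul_integrable d g hg c βS MS _ (by positivity) hbd)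
    (Filter.Eventually.of_forall fun w => (Real.exp_pos _).le)]
  exact ENNReal.ofReal_le_ofReal (fiber_exp d g hg hint c βS MS εS hMS hεS hbd hmean)

/-- lintegral version of the liveness fiber bound. -/
lemma fiber_live_lintegral (g : W → ℝ) (hint : Integrable g d)
    (hnn : ∀ᵐ w ∂d, 0 ≤ g w) (c : ℝ) (hmean : ∫ w, g w ∂d ≤ c) :
    ∫⁻ w, ENNReal.ofReal (g w) ∂d ≤ ENNReal.ofReal c := by
  rw [← ofReal_integral_eq_lintegral_ofReal hint hnn]
  exact ENNReal.ofReal_le_ofReal hmean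

lemma nonneg_mean (g : W → ℝ) (hint : Integrable g d) (hnn : ∀ᵐ w ∂d, 0 ≤ g w) :
    0 ≤ ∫ w, g w ∂d :=
  integral_nonneg_of_ae hnn


end LDBSM
end LDBSMaux

/-- The set of rejecting states: automaton states from which no accepting
state is reachable in the graph induced by the transitions. -/
def Qreject {Q A : Type*} (Δ : Q → A → Set Q) (Acc : Set Q) : Set Q :=
  {q | ∀ q', Relation.ReflTransGen (fun a b => ∃ σ : A, b ∈ Δ a σ) q q' → q' ∉ Acc}

/-- The safety condition `SafetyCond(x, q, σ, q')`: the letter `σ` holds at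
`x`; the successor stays in the invariant `I` for every disturbance; the
expected value of `Vsafe` strictly decreases by at least `εS`; and the change
of `Vsafe` lies in the interval `[βS, βS + MS]` for every disturbance. -/
def SafetyCond {X W Q A : Type*} [MeasurableSpace W]
    (d : Measure W) (F : X × W → X) (L : X → A) (I : Set (X × Q))
    (Vsafe : X × Q → ℝ) (εS MS βS : ℝ) (x : X) (q : Q) (σ : A) (q' : Q) :
    Prop :=
  L x = σ ∧ (∀ w, (F (x, w), q') ∈ I) ∧
    (∫ w, Vsafe (F (x, w), q') ∂d) ≤ Vsafe (x, q) - εS ∧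
    ∀ w, βS ≤ Vsafe (x, q) - Vsafe (F (x, w), q') ∧
      Vsafe (x, q) - Vsafe (F (x, w), q') ≤ βS + MS

theorem ldbsm_soundness
    {X W Q A : Type*}
    [MeasurableSpace X] [MeasurableSpace W]
    [Fintype Q] [MeasurableSpace Q] [DiscreteMeasurableSpace Q]
    [Fintype A] [MeasurableSpace A] [DiscreteMeasurableSpace A]
    (d : Measure W) [IsProbabilityMeasure d]
    (dInf : Measure (ℕ → W)) [IsProbabilityMeasure dInf]
    (hdInf : ∀ (n : ℕ) (s : ℕ → Set W), (∀ i, MeasurableSet (s i)) →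
      dInf {ω | ∀ i < n, ω i ∈ s i} = ∏ i ∈ Finset.range n, d (s i))
    (F : X × W → X) (hF : Measurable F)
    (qinit : Q) (Δ : Q → A → Set Q) (hΔ : ∀ q σ, (Δ q σ).Nonempty)
    (Acc : Set Q)
    (L : X → A) (hL : Measurable L)
    (Init : Set X) (I : Set (X × Q)) (hI : MeasurableSet I)
    (Vsafe Vlive : X × Q → ℝ)
    (hVsafe : Measurable Vsafe) (hVlive : Measurable Vlive)
    (hIntSafe : ∀ (x : X) (q' : Q), Integrable (fun w => Vsafe (F (x, w), q')) d)
    (hIntLive : ∀ (x : X) (q' : Q), Integrable (fun w => Vlive (F (x, w), q')) d)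
    (ηS εS MS βS εL ML : ℝ)
    (hηS : ηS ≤ 0) (hεS : 0 < εS) (hMS : 0 < MS) (hεL : 0 < εL) (hML : 0 < ML)
    -- (a) Initial condition of the invariant
    (ha : ∀ x ∈ Init, (x, qinit) ∈ I)
    -- (b) Initial condition of the safety certificate
    (hb : ∀ x ∈ Init, Vsafe (x, qinit) ≤ ηS)
    -- (c) Safety condition of the safety certificate
    (hc : ∀ x q, (x, q) ∈ I → q ∈ Qreject Δ Acc → 0 ≤ Vsafe (x, q))
    -- (d) Non-negativity condition of the liveness certificate
    (hd : ∀ x q, (x, q) ∈ I → 0 ≤ Vlive (x, q))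
    -- (e) Strict expected decrease of the liveness certificate
    (he : ∀ x q, (x, q) ∈ I → q ∉ Acc ∪ Qreject Δ Acc → Vsafe (x, q) ≤ 0 →
      ∃ σ q', q' ∈ Δ q σ ∧ SafetyCond d F L I Vsafe εS MS βS x q σ q' ∧
        (∫ w, Vlive (F (x, w), q') ∂d) ≤ Vlive (x, q) - εL)
    -- (f) Bounded expected increase of the liveness certificate
    (hf : ∀ x q, (x, q) ∈ I → q ∈ Acc → Vsafe (x, q) ≤ 0 →
      ∃ σ q', q' ∈ Δ q σ ∧ SafetyCond d F L I Vsafe εS MS βS x q σ q' ∧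
        (∫ w, Vlive (F (x, w), q') ∂d) ≤ Vlive (x, q) + ML)
    (p : ℝ) (hp0 : 0 ≤ p) (hp1 : p ≤ 1 - Real.exp (8 * ηS * εS / MS ^ 2)) :
    ∃ πA : X × Q → Q, Measurable πA ∧ (∀ x q, πA (x, q) ∈ Δ q (L x)) ∧
      ∀ x₀ ∈ Init,
        ENNReal.ofReal p ≤
            dInf {ω | {t | (prodTraj F πA x₀ qinit ω t).2 ∈ Acc}.Infinite} ∧
          dInf {ω | {t | (prodTraj F πA x₀ qinit ω t).2 ∈ Acc}.Infinite} ≤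
            dInf {ω | Accepts qinit Δ Acc (L ∘ traj F x₀ ω)} := by
  classical
  letI : LinearOrder Q := LinearOrder.lift' (Fintype.equivFin Q) (Fintype.equivFin Q).injective
  -- the liveness drift allowed in state `q`
  set drift : Q → ℝ := fun q => if q ∈ Acc then ML else -εL with hdrift
  -- the measurable "good successor" predicate used to define the controller
  set Good : Q → Q → X → Prop := fun q q' x =>
    q' ∈ Δ q (L x) ∧
    (∀ᵐ w ∂d, ((F (x, w), q') ∈ I ∧ βS ≤ Vsafe (x, q) - Vsafe (F (x, w), q') ∧
        Vsafe (x, q) - Vsafe (F (x, w), q') ≤ βS + MS)) ∧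
    (∫ w, Vsafe (F (x, w), q') ∂d) ≤ Vsafe (x, q) - εS ∧
    (∫ w, Vlive (F (x, w), q') ∂d) ≤ Vlive (x, q) + drift q with hGoodDef
  have hGoodMeas : ∀ q q', MeasurableSet {x | Good q q' x} := by
    intro q q'
    have h1 : MeasurableSet {x | q' ∈ Δ q (L x)} := by
      have hpre : {x | q' ∈ Δ q (L x)} = L ⁻¹' {σ | q' ∈ Δ q σ} := rfl
      rw [hpre]
      exact hL MeasurableSet.of_discrete
    have hFq' : Measurable (fun p : X × W => (F p, q')) := hF.prodMk measurable_const
    have hVXW : Measurable (fun p : X × W => Vsafe (F p, q')) := hVsafe.comp hFq'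
    have hVx : Measurable (fun p : X × W => Vsafe (p.1, q)) :=
      hVsafe.comp (measurable_fst.prodMk measurable_const)
    have hCmeas : MeasurableSet {p : X × W | ¬((F (p.1, p.2), q') ∈ I ∧
        βS ≤ Vsafe (p.1, q) - Vsafe (F (p.1, p.2), q') ∧
        Vsafe (p.1, q) - Vsafe (F (p.1, p.2), q') ≤ βS + MS)} := by
      apply MeasurableSet.compl
      have e1 : MeasurableSet {p : X × W | (F (p.1, p.2), q') ∈ I} := hFq' hI
      have e2 : MeasurableSet {p : X × W | βS ≤ Vsafe (p.1, q) - Vsafe (F (p.1, p.2), q')} :=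
        measurableSet_le measurable_const (hVx.sub hVXW)
      have e3 : MeasurableSet {p : X × W |
          Vsafe (p.1, q) - Vsafe (F (p.1, p.2), q') ≤ βS + MS} :=
        measurableSet_le (hVx.sub hVXW) measurable_const
      exact e1.inter (e2.inter e3)
    have h2 : MeasurableSet {x | ∀ᵐ w ∂d, ((F (x, w), q') ∈ I ∧
        βS ≤ Vsafe (x, q) - Vsafe (F (x, w), q') ∧
        Vsafe (x, q) - Vsafe (F (x, w), q') ≤ βS + MS)} := by
      have heq : {x | ∀ᵐ w ∂d, ((F (x, w), q') ∈ I ∧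
          βS ≤ Vsafe (x, q) - Vsafe (F (x, w), q') ∧
          Vsafe (x, q) - Vsafe (F (x, w), q') ≤ βS + MS)}
          = {x | d (Prod.mk x ⁻¹' {p : X × W | ¬((F (p.1, p.2), q') ∈ I ∧
              βS ≤ Vsafe (p.1, q) - Vsafe (F (p.1, p.2), q') ∧
              Vsafe (p.1, q) - Vsafe (F (p.1, p.2), q') ≤ βS + MS)}) = 0} := by
        ext x
        rw [Set.mem_setOf_eq, MeasureTheory.ae_iff]
        rfl
      rw [heq]
      exact (measurable_measure_prodMk_left hCmeas) (measurableSet_singleton 0)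
    have hintS : Measurable (fun x => ∫ w, Vsafe (F (x, w), q') ∂d) :=
      (hVXW.stronglyMeasurable.integral_prod_right').measurable
    have hintL : Measurable (fun x => ∫ w, Vlive (F (x, w), q') ∂d) :=
      ((hVlive.comp hFq').stronglyMeasurable.integral_prod_right').measurable
    have h3 : MeasurableSet {x | (∫ w, Vsafe (F (x, w), q') ∂d) ≤ Vsafe (x, q) - εS} :=
      measurableSet_le hintS ((hVsafe.comp (measurable_id.prodMk measurable_const)).sub
        measurable_const)
    have h4 : MeasurableSet {x | (∫ w, Vlive (F (x, w), q') ∂d) ≤ Vlive (x, q) + drift q} :=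
      measurableSet_le hintL ((hVlive.comp (measurable_id.prodMk measurable_const)).add
        measurable_const)
    have : {x | Good q q' x} = {x | q' ∈ Δ q (L x)} ∩ ({x | ∀ᵐ w ∂d, ((F (x, w), q') ∈ I ∧
        βS ≤ Vsafe (x, q) - Vsafe (F (x, w), q') ∧
        Vsafe (x, q) - Vsafe (F (x, w), q') ≤ βS + MS)} ∩
        ({x | (∫ w, Vsafe (F (x, w), q') ∂d) ≤ Vsafe (x, q) - εS} ∩
         {x | (∫ w, Vlive (F (x, w), q') ∂d) ≤ Vlive (x, q) + drift q})) := by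
      ext x
      simp only [hGoodDef, Set.mem_setOf_eq, Set.mem_inter_iff]
    rw [this]
    exact h1.inter (h2.inter (h3.inter h4))
  -- selection of a good successor
  set sel : Q → X → Finset Q := fun q x => Finset.univ.filter (fun q' => Good q q' x) with hsel
  set πA : X × Q → Q := fun p =>
    if h : (sel p.2 p.1).Nonempty then (sel p.2 p.1).min' h else (hΔ p.2 (L p.1)).some
    with hπA
  have hπΔ : ∀ x q, πA (x, q) ∈ Δ q (L x) := by
    intro x q
    simp only [hπA]
    split
    · rename_i h
      have := Finset.min'_mem _ h
      simp only [hsel, Finset.mem_filter] at this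
      exact this.2.1
    · exact (hΔ q (L x)).some_mem
  have hπGood : ∀ x q, (x, q) ∈ I → Vsafe (x, q) ≤ 0 → q ∉ Qreject Δ Acc →
      Good q (πA (x, q)) x := by
    intro x q hxI hV hqr
    have hex : ∃ q', Good q q' x := by
      by_cases hqa : q ∈ Acc
      · obtain ⟨σ, q', hq'Δ, hSC, hlive⟩ := hf x q hxI hqa hV
        obtain ⟨hLx, hInv, hSint, hBdd⟩ := hSC
        refine ⟨q', ?_, ?_, hSint, ?_⟩
        · rw [hLx]; exact hq'Δ
        · exact Filter.Eventually.of_forall fun w => ⟨hInv w, (hBdd w).1, (hBdd w).2⟩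
        · rw [hdrift]; simp only [if_pos hqa]; exact hlive
      · obtain ⟨σ, q', hq'Δ, hSC, hlive⟩ := he x q hxI (by
          intro hmem
          rcases hmem with h | h
          · exact hqa h
          · exact hqr h) hV
        obtain ⟨hLx, hInv, hSint, hBdd⟩ := hSC
        refine ⟨q', ?_, ?_, hSint, ?_⟩
        · rw [hLx]; exact hq'Δ
        · exact Filter.Eventually.of_forall fun w => ⟨hInv w, (hBdd w).1, (hBdd w).2⟩
        · rw [hdrift]; simp only [if_neg hqa]; exact hlive
    obtain ⟨q', hq'⟩ := hex
    have hne : (sel q x).Nonempty := by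
      refine ⟨q', ?_⟩
      simp only [hsel, Finset.mem_filter]
      exact ⟨Finset.mem_univ _, hq'⟩
    have hmem := Finset.min'_mem (sel q x) hne
    simp only [hsel, Finset.mem_filter] at hmem
    have hπval : πA (x, q) = (sel q x).min' hne := by
      simp only [hπA]
      rw [dif_pos hne]
    rw [hπval]
    exact hmem.2
  have hπMeas : Measurable πA := by
    apply measurable_from_prod_countable_left
    intro q
    apply measurable_to_countable'
    intro q₀
    have heq : (fun x => πA (x, q)) ⁻¹' {q₀} = ⋃ s : Finset Q,
        ({x | sel q x = s} ∩ {x | (if h : s.Nonempty then s.min' h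
            else (hΔ q (L x)).some) = q₀}) := by
      ext x
      simp only [Set.mem_preimage, Set.mem_singleton_iff, Set.mem_iUnion, Set.mem_inter_iff,
        Set.mem_setOf_eq]
      constructor
      · intro h
        refine ⟨sel q x, rfl, ?_⟩
        simp only [hπA] at h
        exact h
      · rintro ⟨s, hs, hval⟩
        simp only [hπA]
        subst hs
        exact hval
    rw [heq]
    apply MeasurableSet.iUnion
    intro s
    apply MeasurableSet.inter
    · have hseq : {x | sel q x = s}
          = ⋂ q' : Q, (if q' ∈ s then {x | Good q q' x} else {x | Good q q' x}ᶜ) := by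
        ext x
        simp only [Set.mem_setOf_eq, Set.mem_iInter]
        constructor
        · intro h q'
          by_cases hq' : q' ∈ s
          · simp only [if_pos hq']
            have hmem : q' ∈ sel q x := by rw [h]; exact hq'
            simp only [hsel, Finset.mem_filter] at hmem
            exact hmem.2
          · simp only [if_neg hq', Set.mem_compl_iff, Set.mem_setOf_eq]
            intro hg
            apply hq'
            rw [← h]
            simp only [hsel, Finset.mem_filter]
            exact ⟨Finset.mem_univ _, hg⟩
        · intro h
          apply Finset.ext
          intro q'
          have hthis := h q'
          simp only [hsel, Finset.mem_filter, Finset.mem_univ, true_and]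
          by_cases hq' : q' ∈ s
          · simp only [if_pos hq'] at hthis
            exact ⟨fun _ => hq', fun _ => hthis⟩
          · simp only [if_neg hq', Set.mem_compl_iff, Set.mem_setOf_eq] at hthis
            exact ⟨fun hg => absurd hg hthis, fun hmem => absurd hmem hq'⟩
      rw [hseq]
      apply MeasurableSet.iInter
      intro q'
      split
      · exact hGoodMeas q q'
      · exact (hGoodMeas q q').compl
    · by_cases hs : s.Nonempty
      · simp only [dif_pos hs]
        by_cases hv : s.min' hs = q₀
        · have : {x : X | s.min' hs = q₀} = Set.univ := by ext; simp [hv]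
          rw [this]; exact MeasurableSet.univ
        · have : {x : X | s.min' hs = q₀} = ∅ := by ext; simp [hv]
          rw [this]; exact MeasurableSet.empty
      · simp only [dif_neg hs]
        have : {x | (hΔ q (L x)).some = q₀} = L ⁻¹' {σ | (hΔ q σ).some = q₀} := rfl
        rw [this]
        exact hL MeasurableSet.of_discrete
  refine ⟨πA, hπMeas, hπΔ, ?_⟩
  intro x₀ hx₀
  set Z : ℕ → (ℕ → W) → X × Q := fun t ω => prodTraj F πA x₀ qinit ω t with hZ
  have hZsucc : ∀ t (ω : ℕ → W), Z (t + 1) ω = (F ((Z t ω).1, ω t), πA (Z t ω)) :=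
    fun t ω => rfl
  have hZmeas : ∀ t, Measurable (Z t) := by
    intro t
    induction t with
    | zero => exact measurable_const
    | succ t ih =>
      rw [hZ]
      exact (hF.comp ((measurable_fst.comp ih).prodMk (measurable_pi_apply t))).prodMk
        (hπMeas.comp ih)
  have hZdep : ∀ (t : ℕ) (ω ω' : ℕ → W), (∀ i < t, ω i = ω' i) → Z t ω = Z t ω' := by
    intro t
    induction t with
    | zero => intro ω ω' _; rfl
    | succ t ih =>
      intro ω ω' h
      have h1 : Z t ω = Z t ω' := ih ω ω' (fun i hi => h i (Nat.lt_succ_of_lt hi))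
      rw [hZsucc, hZsucc, h1, h t (Nat.lt_succ_self t)]
  have htraj : ∀ (ω : ℕ → W) (t : ℕ), traj F x₀ ω t = (Z t ω).1 := by
    intro ω t
    induction t with
    | zero => rfl
    | succ t ih =>
      rw [hZsucc]
      show F (traj F x₀ ω t, ω t) = _
      rw [ih]
  have hsetZ : {ω : ℕ → W | {t | (prodTraj F πA x₀ qinit ω t).2 ∈ Acc}.Infinite}
      = {ω : ℕ → W | {t | (Z t ω).2 ∈ Acc}.Infinite} := rfl
  constructor
  · -- main probability bound
    by_cases hppos : p ≤ 0
    · have hor : ENNReal.ofReal p = 0 := ENNReal.ofReal_eq_zero.2 hppos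
      rw [hor]
      exact zero_le
    push_neg at hppos
    have hηneg : ηS < 0 := by
      rcases lt_or_eq_of_le hηS with h | h
      · exact h
      · exfalso
        rw [h] at hp1
        simp at hp1
        linarith
    set lam : ℝ := 8 * εS / MS ^ 2 with hlam
    have hlampos : 0 < lam := by positivity
    -- safe-prefix sets
    set AS : ℕ → Set (ℕ → W) := fun u => {ω | ∀ v < u, Z v ω ∈ I ∧ Vsafe (Z v ω) < 0} with hAS
    have hASmeas : ∀ u, MeasurableSet (AS u) := by
      intro u
      have heq : AS u = ⋂ v, ⋂ _ : v < u,
          ((Z v ⁻¹' I) ∩ ((fun ω => Vsafe (Z v ω)) ⁻¹' Set.Iio 0)) := by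
        ext ω
        simp only [hAS, Set.mem_setOf_eq, Set.mem_iInter, Set.mem_inter_iff, Set.mem_preimage,
          Set.mem_Iio]
      rw [heq]
      exact MeasurableSet.iInter fun v => MeasurableSet.iInter fun _ =>
        ((hZmeas v) hI).inter ((hVsafe.comp (hZmeas v)) measurableSet_Iio)
    have hZupdate : ∀ (t v : ℕ) (w : W) (ω : ℕ → W), v ≤ t →
        Z v (Function.update ω t w) = Z v ω := by
      intro t v w ω hv
      apply hZdep
      intro i hi
      have hne : i ≠ t := by omega
      exact Function.update_of_ne hne w ω
    have hASupdate : ∀ (t : ℕ) (w : W) (ω : ℕ → W),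
        (Function.update ω t w ∈ AS (t + 1) ↔ ω ∈ AS (t + 1)) := by
      intro t w ω
      simp only [hAS, Set.mem_setOf_eq]
      constructor
      · intro h v hv
        have := h v hv
        rwa [hZupdate t v w ω (by omega)] at this
      · intro h v hv
        rw [hZupdate t v w ω (by omega)]
        exact h v hv
    have hfiber : ∀ (t : ℕ) (ω : ℕ → W), ω ∈ AS (t + 1) →
        Good (Z t ω).2 (πA (Z t ω)) (Z t ω).1 := by
      intro t ω hω
      have h1 := hω t (Nat.lt_succ_self t)
      have hqr : (Z t ω).2 ∉ Qreject Δ Acc := by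
        intro hmem
        have h0 := hc (Z t ω).1 (Z t ω).2 h1.1 hmem
        linarith [h1.2]
      exact hπGood (Z t ω).1 (Z t ω).2 h1.1 h1.2.le hqr
    -- the exponential of the safety certificate
    set EV : ℕ → (ℕ → W) → ENNReal :=
      fun t ω => ENNReal.ofReal (Real.exp (lam * Vsafe (Z t ω))) with hEV
    have hEVmeas : ∀ t, Measurable (EV t) := fun t =>
      (((hVsafe.comp (hZmeas t)).const_mul lam).exp).ennreal_ofReal
    -- supermartingale one-step inequality
    have hstep : ∀ t : ℕ, ∫⁻ ω in AS (t + 1), EV (t + 1) ω ∂dInf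
        ≤ ∫⁻ ω in AS (t + 1), EV t ω ∂dInf := by
      intro t
      set f : (ℕ → W) → ENNReal := (AS (t + 1)).indicator (EV (t + 1)) with hfdef
      have hfmeas : Measurable f := (hEVmeas (t + 1)).indicator (hASmeas (t + 1))
      have hfdep : ∀ ω ω' : ℕ → W, (∀ i ≤ t, ω i = ω' i) → f ω = f ω' := by
        intro ω ω' hagree
        have hZt : ∀ v ≤ t + 1, Z v ω = Z v ω' :=
          fun v hv => hZdep v ω ω' (fun i hi => hagree i (by omega))
        have hASmem : ω ∈ AS (t + 1) ↔ ω' ∈ AS (t + 1) := by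
          simp only [hAS, Set.mem_setOf_eq]
          constructor <;> intro h v hv
          · rw [← hZt v (by omega)]; exact h v hv
          · rw [hZt v (by omega)]; exact h v hv
        by_cases hω : ω ∈ AS (t + 1)
        · rw [hfdef, Set.indicator_of_mem hω, Set.indicator_of_mem (hASmem.1 hω)]
          simp only [hEV, hZt (t + 1) (le_refl _)]
        · rw [hfdef, Set.indicator_of_notMem hω,
            Set.indicator_of_notMem (fun hmem => hω (hASmem.2 hmem))]
      have hptw : ∀ ω : ℕ → W, (∫⁻ w, f (Function.update ω t w) ∂d)
          ≤ (AS (t + 1)).indicator (EV t) ω := by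
        intro ω
        by_cases hω : ω ∈ AS (t + 1)
        · have hupd : ∀ w, f (Function.update ω t w)
              = ENNReal.ofReal (Real.exp (lam * Vsafe (F ((Z t ω).1, w), πA (Z t ω)))) := by
            intro w
            have hmem : Function.update ω t w ∈ AS (t + 1) := (hASupdate t w ω).2 hω
            rw [hfdef, Set.indicator_of_mem hmem]
            have hZn : Z (t + 1) (Function.update ω t w) = (F ((Z t ω).1, w), πA (Z t ω)) := by
              rw [hZsucc]
              rw [hZupdate t t w ω (le_refl t), Function.update_self]
            simp only [hEV, hZn]
          rw [lintegral_congr hupd, Set.indicator_of_mem hω]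
          obtain ⟨hΔ', hae, hSint, hLint⟩ := hfiber t ω hω
          have hgm : Measurable (fun w => Vsafe (F ((Z t ω).1, w), πA (Z t ω))) :=
            hVsafe.comp ((hF.comp (measurable_const.prodMk measurable_id)).prodMk
              measurable_const)
          have hbound := LDBSM.fiber_exp_lintegral d
            (fun w => Vsafe (F ((Z t ω).1, w), πA (Z t ω))) hgm
            (hIntSafe (Z t ω).1 (πA (Z t ω))) (Vsafe (Z t ω)) βS MS εS hMS hεS
            (by
              filter_upwards [hae] with w hw
              exact ⟨hw.2.1, hw.2.2⟩)
            hSint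
          rw [hEV]
          exact hbound
        · have hupd : ∀ w, f (Function.update ω t w) = 0 := by
            intro w
            rw [hfdef, Set.indicator_of_notMem (fun hmem => hω ((hASupdate t w ω).1 hmem))]
          rw [Set.indicator_of_notMem hω]
          simp [hupd]
      calc ∫⁻ ω in AS (t + 1), EV (t + 1) ω ∂dInf
          = ∫⁻ ω, f ω ∂dInf := (lintegral_indicator (hASmeas (t + 1)) _).symm
        _ = ∫⁻ ω, ∫⁻ w, f (Function.update ω t w) ∂d ∂dInf :=
            LDBSM.key_lintegral d dInf hdInf t f hfmeas hfdep
        _ ≤ ∫⁻ ω, (AS (t + 1)).indicator (EV t) ω ∂dInf := lintegral_mono hptw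
        _ = ∫⁻ ω in AS (t + 1), EV t ω ∂dInf := lintegral_indicator (hASmeas (t + 1)) _
    -- the (stopped) exceedance events
    set BadV : ℕ → Set (ℕ → W) := fun t => {ω | ∃ u ≤ t, ω ∈ AS u ∧ 0 ≤ Vsafe (Z u ω)}
      with hBadV
    have hBadVmeas : ∀ t, MeasurableSet (BadV t) := by
      intro t
      have heq : BadV t = ⋃ u, ⋃ _ : u ≤ t,
          (AS u ∩ ((fun ω => Vsafe (Z u ω)) ⁻¹' Set.Ici 0)) := by
        ext ω
        simp only [hBadV, Set.mem_setOf_eq, Set.mem_iUnion, Set.mem_inter_iff, Set.mem_preimage,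
          Set.mem_Ici]
        constructor
        · rintro ⟨u, hu, h1, h2⟩; exact ⟨u, hu, h1, h2⟩
        · rintro ⟨u, hu, h1, h2⟩; exact ⟨u, hu, h1, h2⟩
      rw [heq]
      exact MeasurableSet.iUnion fun u => MeasurableSet.iUnion fun _ =>
        (hASmeas u).inter ((hVsafe.comp (hZmeas u)) measurableSet_Ici)
    -- Ville's inequality by induction
    have hVille : ∀ t : ℕ, dInf (BadV t) + ∫⁻ ω in AS (t + 1), EV t ω ∂dInf
        ≤ ENNReal.ofReal (Real.exp (lam * ηS)) := by
      intro t
      induction t with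
      | zero =>
        have hBV0 : BadV 0 = ∅ := by
          ext ω
          simp only [hBadV, Set.mem_setOf_eq, Set.mem_empty_iff_false, iff_false, not_exists]
          intro u
          rintro ⟨hu, _, hV⟩
          interval_cases u
          have : Vsafe (Z 0 ω) ≤ ηS := hb x₀ hx₀
          linarith
        rw [hBV0]
        simp only [measure_empty, zero_add]
        calc ∫⁻ ω in AS 1, EV 0 ω ∂dInf
            ≤ ∫⁻ ω, EV 0 ω ∂dInf := lintegral_mono' Measure.restrict_le_self (le_refl _)
          _ = ENNReal.ofReal (Real.exp (lam * Vsafe (x₀, qinit))) := by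
              have : ∀ ω : ℕ → W, EV 0 ω = ENNReal.ofReal (Real.exp (lam * Vsafe (x₀, qinit))) :=
                fun ω => rfl
              rw [lintegral_congr this, lintegral_const, measure_univ, mul_one]
          _ ≤ ENNReal.ofReal (Real.exp (lam * ηS)) := by
              apply ENNReal.ofReal_le_ofReal
              apply Real.exp_le_exp.2
              exact mul_le_mul_of_nonneg_left (hb x₀ hx₀) hlampos.le
      | succ t ih =>
        have hsub : BadV (t + 1) ⊆ BadV t ∪ (AS (t + 1) ∩ {ω | 0 ≤ Vsafe (Z (t + 1) ω)}) := by
          intro ω hω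
          obtain ⟨u, hu, hA, hV⟩ := hω
          rcases Nat.lt_succ_iff_lt_or_eq.1 (Nat.lt_succ_of_le hu) with h | h
          · left
            exact ⟨u, by omega, hA, hV⟩
          · right
            subst h
            exact ⟨hA, hV⟩
        have h1 : dInf (BadV (t + 1)) ≤ dInf (BadV t)
            + dInf (AS (t + 1) ∩ {ω | 0 ≤ Vsafe (Z (t + 1) ω)}) :=
          (measure_mono hsub).trans (measure_union_le _ _)
        have hge : MeasurableSet {ω : ℕ → W | 0 ≤ Vsafe (Z (t + 1) ω)} := by
          have : {ω : ℕ → W | 0 ≤ Vsafe (Z (t + 1) ω)}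
              = (fun ω => Vsafe (Z (t + 1) ω)) ⁻¹' Set.Ici 0 := rfl
          rw [this]
          exact (hVsafe.comp (hZmeas (t + 1))) measurableSet_Ici
        have h2 : dInf (AS (t + 1) ∩ {ω | 0 ≤ Vsafe (Z (t + 1) ω)})
            ≤ ∫⁻ ω in AS (t + 1) ∩ {ω | 0 ≤ Vsafe (Z (t + 1) ω)}, EV (t + 1) ω ∂dInf := by
          rw [← setLIntegral_one]
          apply setLIntegral_mono' ((hASmeas (t + 1)).inter hge)
          intro ω hω
          rw [hEV]
          apply ENNReal.one_le_ofReal.2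
          exact Real.one_le_exp (mul_nonneg hlampos.le hω.2)
        have h3 : ∫⁻ ω in AS (t + 2), EV (t + 1) ω ∂dInf
            ≤ ∫⁻ ω in AS (t + 1) ∩ {ω | Vsafe (Z (t + 1) ω) < 0}, EV (t + 1) ω ∂dInf := by
          apply lintegral_mono_set
          intro ω hω
          constructor
          · intro v hv; exact hω v (by omega)
          · exact (hω (t + 1) (by omega)).2
        have h4 : ∫⁻ ω in AS (t + 1) ∩ {ω | 0 ≤ Vsafe (Z (t + 1) ω)}, EV (t + 1) ω ∂dInf
            + ∫⁻ ω in AS (t + 1) ∩ {ω | Vsafe (Z (t + 1) ω) < 0}, EV (t + 1) ω ∂dInf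
            = ∫⁻ ω in AS (t + 1), EV (t + 1) ω ∂dInf := by
          have hlt : MeasurableSet {ω : ℕ → W | Vsafe (Z (t + 1) ω) < 0} := by
            have : {ω : ℕ → W | Vsafe (Z (t + 1) ω) < 0}
                = (fun ω => Vsafe (Z (t + 1) ω)) ⁻¹' Set.Iio 0 := rfl
            rw [this]
            exact (hVsafe.comp (hZmeas (t + 1))) measurableSet_Iio
          rw [← lintegral_union ((hASmeas (t + 1)).inter hlt)]
          · congr 1
            rw [← Set.inter_union_distrib_left]
            have : {ω : ℕ → W | 0 ≤ Vsafe (Z (t + 1) ω)} ∪ {ω | Vsafe (Z (t + 1) ω) < 0}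
                = Set.univ := by
              ext ω
              simp only [Set.mem_union, Set.mem_setOf_eq, Set.mem_univ, iff_true]
              exact le_or_gt 0 _
            rw [this, Set.inter_univ]
          · apply Set.disjoint_left.2
            rintro ω ⟨_, h0⟩ ⟨_, hlt0⟩
            simp only [Set.mem_setOf_eq] at h0 hlt0
            linarith
        calc dInf (BadV (t + 1)) + ∫⁻ ω in AS (t + 1 + 1), EV (t + 1) ω ∂dInf
            ≤ (dInf (BadV t) + dInf (AS (t + 1) ∩ {ω | 0 ≤ Vsafe (Z (t + 1) ω)}))
              + ∫⁻ ω in AS (t + 1) ∩ {ω | Vsafe (Z (t + 1) ω) < 0}, EV (t + 1) ω ∂dInf :=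
              add_le_add h1 h3
          _ ≤ dInf (BadV t) + (∫⁻ ω in AS (t + 1) ∩ {ω | 0 ≤ Vsafe (Z (t + 1) ω)}, EV (t + 1) ω ∂dInf
              + ∫⁻ ω in AS (t + 1) ∩ {ω | Vsafe (Z (t + 1) ω) < 0}, EV (t + 1) ω ∂dInf) := by
              rw [add_assoc]
              exact add_le_add_right (add_le_add_left h2 _) _
          _ = dInf (BadV t) + ∫⁻ ω in AS (t + 1), EV (t + 1) ω ∂dInf := by rw [h4]
          _ ≤ dInf (BadV t) + ∫⁻ ω in AS (t + 1), EV t ω ∂dInf :=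
              add_le_add_right (hstep t) _
          _ ≤ ENNReal.ofReal (Real.exp (lam * ηS)) := ih
    have hBadVbound : ∀ t, dInf (BadV t) ≤ ENNReal.ofReal (Real.exp (lam * ηS)) :=
      fun t => le_trans le_self_add (hVille t)
    -- the null "invariant exit" events
    have hNullI : ∀ t : ℕ, dInf (AS (t + 1) ∩ {ω | Z (t + 1) ω ∉ I}) = 0 := by
      intro t
      have hmeasI : MeasurableSet (AS (t + 1) ∩ {ω | Z (t + 1) ω ∉ I}) :=
        (hASmeas (t + 1)).inter ((hZmeas (t + 1)) hI.compl)
      set f : (ℕ → W) → ENNReal := (AS (t + 1) ∩ {ω | Z (t + 1) ω ∉ I}).indicator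
          (fun _ => (1 : ENNReal)) with hfdef
      have hfmeas : Measurable f := (measurable_const).indicator hmeasI
      have hfdep : ∀ ω ω' : ℕ → W, (∀ i ≤ t, ω i = ω' i) → f ω = f ω' := by
        intro ω ω' hagree
        have hZt : ∀ v ≤ t + 1, Z v ω = Z v ω' :=
          fun v hv => hZdep v ω ω' (fun i hi => hagree i (by omega))
        have hmemiff : ω ∈ AS (t + 1) ∩ {ω | Z (t + 1) ω ∉ I}
            ↔ ω' ∈ AS (t + 1) ∩ {ω | Z (t + 1) ω ∉ I} := by
          simp only [Set.mem_inter_iff, hAS, Set.mem_setOf_eq]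
          rw [hZt (t + 1) (le_refl _)]
          constructor <;> intro h <;> refine ⟨fun v hv => ?_, h.2⟩
          · rw [← hZt v (by omega)]; exact h.1 v hv
          · rw [hZt v (by omega)]; exact h.1 v hv
        by_cases hω : ω ∈ AS (t + 1) ∩ {ω | Z (t + 1) ω ∉ I}
        · rw [hfdef, Set.indicator_of_mem hω, Set.indicator_of_mem (hmemiff.1 hω)]
        · rw [hfdef, Set.indicator_of_notMem hω,
            Set.indicator_of_notMem (fun hmem => hω (hmemiff.2 hmem))]
      have hinner : ∀ ω : ℕ → W, ∫⁻ w, f (Function.update ω t w) ∂d = 0 := by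
        intro ω
        by_cases hω : ω ∈ AS (t + 1)
        · obtain ⟨hΔ', hae, hSint, hLint⟩ := hfiber t ω hω
          have hone : ∀ᵐ w ∂d, f (Function.update ω t w) = 0 := by
            filter_upwards [hae] with w hw
            apply Set.indicator_of_notMem
            intro hmem
            apply hmem.2
            have hZn : Z (t + 1) (Function.update ω t w) = (F ((Z t ω).1, w), πA (Z t ω)) := by
              rw [hZsucc]
              rw [hZupdate t t w ω (le_refl t), Function.update_self]
            rw [hZn]
            exact hw.1
          rw [lintegral_congr_ae hone]
          simp
        · have hzero : ∀ w, f (Function.update ω t w) = 0 := by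
            intro w
            apply Set.indicator_of_notMem
            intro hmem
            exact hω ((hASupdate t w ω).1 hmem.1)
          rw [lintegral_congr hzero]
          simp
      have h0 : ∫⁻ ω, f ω ∂dInf = 0 := by
        rw [LDBSM.key_lintegral d dInf hdInf t f hfmeas hfdep]
        rw [lintegral_congr hinner]
        simp
      have : dInf (AS (t + 1) ∩ {ω | Z (t + 1) ω ∉ I}) = ∫⁻ ω, f ω ∂dInf := by
        rw [hfdef, lintegral_indicator hmeasI]
        rw [setLIntegral_one]
      rw [this, h0]
    -- the event of staying safe forever
    set SafeAll : Set (ℕ → W) := ⋂ u, AS u with hSafeAll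
    have hSafeAllmeas : MeasurableSet SafeAll := MeasurableSet.iInter fun u => hASmeas u
    have hcomplsub : SafeAllᶜ ⊆ (⋃ t, BadV t) ∪ (⋃ t, AS (t + 1) ∩ {ω | Z (t + 1) ω ∉ I}) := by
      intro ω hω
      simp only [hSafeAll, Set.mem_compl_iff, Set.mem_iInter, not_forall] at hω
      have hex : ∃ t, ω ∉ AS t := hω
      have ht₀ : ω ∉ AS (Nat.find hex) := Nat.find_spec hex
      have hmin : ∀ s, s < Nat.find hex → ω ∈ AS s := fun s hs => not_not.1 (Nat.find_min hex hs)
      have ht₀pos : Nat.find hex ≠ 0 := by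
        intro h0
        apply ht₀
        rw [h0]
        intro v hv
        exact absurd hv (Nat.not_lt_zero v)
      obtain ⟨u, hu⟩ := Nat.exists_eq_succ_of_ne_zero ht₀pos
      have hAu : ω ∈ AS u := hmin u (by omega)
      have hfail : ¬(Z u ω ∈ I ∧ Vsafe (Z u ω) < 0) := by
        intro hg
        apply ht₀
        rw [hu]
        intro v hv
        rcases Nat.lt_succ_iff_lt_or_eq.1 hv with h | h
        · exact hAu v h
        · rw [h]; exact hg
      by_cases hVc : 0 ≤ Vsafe (Z u ω)
      · left
        exact Set.mem_iUnion.2 ⟨u, u, le_refl u, hAu, hVc⟩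
      · right
        push_neg at hVc
        have hZnI : Z u ω ∉ I := fun hin => hfail ⟨hin, hVc⟩
        rcases Nat.eq_zero_or_pos u with h0 | hpos
        · exfalso
          apply hZnI
          rw [h0]
          exact ha x₀ hx₀
        · obtain ⟨v, hv⟩ := Nat.exists_eq_succ_of_ne_zero (Nat.pos_iff_ne_zero.1 hpos)
          subst hv
          exact Set.mem_iUnion.2 ⟨v, hAu, hZnI⟩
    have hBadVmono : Monotone BadV := by
      intro s t hst ω hω
      obtain ⟨u, hu, h1, h2⟩ := hω
      exact ⟨u, le_trans hu hst, h1, h2⟩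
    have hUnionBad : dInf (⋃ t, BadV t) ≤ ENNReal.ofReal (Real.exp (lam * ηS)) := by
      rw [hBadVmono.measure_iUnion]
      exact iSup_le hBadVbound
    have hcompl_bound : dInf SafeAllᶜ ≤ ENNReal.ofReal (Real.exp (lam * ηS)) := by
      calc dInf SafeAllᶜ ≤ dInf ((⋃ t, BadV t) ∪ (⋃ t, AS (t + 1) ∩ {ω | Z (t + 1) ω ∉ I})) :=
            measure_mono hcomplsub
        _ ≤ dInf (⋃ t, BadV t) + dInf (⋃ t, AS (t + 1) ∩ {ω | Z (t + 1) ω ∉ I}) :=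
            measure_union_le _ _
        _ = dInf (⋃ t, BadV t) := by
            rw [measure_iUnion_null (fun t => hNullI t), add_zero]
        _ ≤ ENNReal.ofReal (Real.exp (lam * ηS)) := hUnionBad
    have hSafeBound : ENNReal.ofReal p ≤ dInf SafeAll := by
      have hcompl : dInf SafeAll = 1 - dInf SafeAllᶜ := by
        rw [← prob_compl_eq_one_sub hSafeAllmeas.compl, compl_compl]
      rw [hcompl]
      have hexple : ENNReal.ofReal p ≤ 1 - ENNReal.ofReal (Real.exp (lam * ηS)) := by
        have harg : lam * ηS = 8 * ηS * εS / MS ^ 2 := by rw [hlam]; ring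
        rw [harg]
        have h1 : ENNReal.ofReal p ≤ ENNReal.ofReal (1 - Real.exp (8 * ηS * εS / MS ^ 2)) :=
          ENNReal.ofReal_le_ofReal hp1
        rwa [ENNReal.ofReal_sub 1 (Real.exp_pos _).le, ENNReal.ofReal_one] at h1
      refine hexple.trans ?_
      exact tsub_le_tsub_left hcompl_bound 1
    -- liveness: almost surely, safe trajectories visit `Acc` infinitely often
    have hLiveNull : dInf (SafeAll ∩ {ω | ¬ {t | (Z t ω).2 ∈ Acc}.Infinite}) = 0 := by
      -- the generic one-step splitting identity
      have hsplit : ∀ (t : ℕ) (S : Set (ℕ → W)), MeasurableSet S →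
          (∀ ω ω' : ℕ → W, (∀ v, v ≤ t → Z v ω = Z v ω') → (ω ∈ S ↔ ω' ∈ S)) →
          ∀ g : X × Q → ENNReal, Measurable g →
          ∫⁻ ω in S, g (Z (t + 1) ω) ∂dInf
            = ∫⁻ ω, S.indicator
                (fun ω => ∫⁻ w, g (F ((Z t ω).1, w), πA (Z t ω)) ∂d) ω ∂dInf := by
        intro t S hSmeas hSdep g hg
        set f : (ℕ → W) → ENNReal := S.indicator (fun ω => g (Z (t + 1) ω)) with hfdef
        have hfmeas : Measurable f := (hg.comp (hZmeas (t + 1))).indicator hSmeas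
        have hfdep : ∀ ω ω' : ℕ → W, (∀ i ≤ t, ω i = ω' i) → f ω = f ω' := by
          intro ω ω' hagree
          have hZt : ∀ v, v ≤ t + 1 → Z v ω = Z v ω' :=
            fun v hv => hZdep v ω ω' (fun i hi => hagree i (by omega))
          have hiff := hSdep ω ω' (fun v hv => hZt v (by omega))
          by_cases hω : ω ∈ S
          · rw [hfdef, Set.indicator_of_mem hω, Set.indicator_of_mem (hiff.1 hω),
              hZt (t + 1) le_rfl]
          · rw [hfdef, Set.indicator_of_notMem hω,
              Set.indicator_of_notMem (fun h => hω (hiff.2 h))]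
        have hApt : ∀ ω : ℕ → W, ∫⁻ w, f (Function.update ω t w) ∂d
            = S.indicator (fun ω => ∫⁻ w, g (F ((Z t ω).1, w), πA (Z t ω)) ∂d) ω := by
          intro ω
          have hupdIff : ∀ w, (Function.update ω t w ∈ S ↔ ω ∈ S) := fun w =>
            hSdep _ _ (fun v hv => hZupdate t v w ω hv)
          by_cases hω : ω ∈ S
          · rw [Set.indicator_of_mem hω]
            apply lintegral_congr
            intro w
            rw [hfdef, Set.indicator_of_mem ((hupdIff w).2 hω)]
            have hZn : Z (t + 1) (Function.update ω t w)
                = (F ((Z t ω).1, w), πA (Z t ω)) := by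
              rw [hZsucc, hZupdate t t w ω le_rfl, Function.update_self]
            rw [hZn]
          · rw [Set.indicator_of_notMem hω]
            have hz : ∀ w, f (Function.update ω t w) = 0 := fun w =>
              Set.indicator_of_notMem (fun h => hω ((hupdIff w).1 h)) _
            simp [hz]
        calc ∫⁻ ω in S, g (Z (t + 1) ω) ∂dInf = ∫⁻ ω, f ω ∂dInf :=
              (lintegral_indicator hSmeas _).symm
          _ = ∫⁻ ω, ∫⁻ w, f (Function.update ω t w) ∂d ∂dInf :=
              LDBSM.key_lintegral d dInf hdInf t f hfmeas hfdep
          _ = _ := lintegral_congr hApt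
      -- reduce to a single "no accepting visit after time N" event
      have hsubU : SafeAll ∩ {ω | ¬ {t | (Z t ω).2 ∈ Acc}.Infinite}
          ⊆ ⋃ N : ℕ, (SafeAll ∩ {ω | ∀ u, N < u → (Z u ω).2 ∉ Acc}) := by
        rintro ω ⟨hsafe, hfin⟩
        simp only [Set.mem_setOf_eq] at hfin
        rw [Set.not_infinite] at hfin
        obtain ⟨N, hN⟩ := hfin.bddAbove
        refine Set.mem_iUnion.2 ⟨N, hsafe, ?_⟩
        intro u hu hacc
        have := hN hacc
        omega
      refine measure_mono_null hsubU (measure_iUnion_null fun N => ?_)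
      -- the events: safe up to time `N+k` with no accepting visit in `(N, N+k]`
      set G : ℕ → Set (ℕ → W) := fun k =>
        AS (N + k + 1) ∩ {ω | ∀ u, N < u → u ≤ N + k → (Z u ω).2 ∉ Acc} with hG
      have hGmeas : ∀ k, MeasurableSet (G k) := by
        intro k
        apply (hASmeas _).inter
        have heq : {ω : ℕ → W | ∀ u, N < u → u ≤ N + k → (Z u ω).2 ∉ Acc}
            = ⋂ u, ⋂ _ : N < u, ⋂ _ : u ≤ N + k, ((fun ω => (Z u ω).2) ⁻¹' Acc)ᶜ := by
          ext ω
          simp only [Set.mem_setOf_eq, Set.mem_iInter, Set.mem_compl_iff, Set.mem_preimage]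
        rw [heq]
        exact MeasurableSet.iInter fun u => MeasurableSet.iInter fun _ =>
          MeasurableSet.iInter fun _ =>
            ((measurable_snd.comp (hZmeas u)) MeasurableSet.of_discrete).compl
      have hGdep : ∀ k, ∀ ω ω' : ℕ → W, (∀ v, v ≤ N + k → Z v ω = Z v ω') →
          (ω ∈ G k ↔ ω' ∈ G k) := by
        intro k ω ω' hZv
        simp only [hG, Set.mem_inter_iff, hAS, Set.mem_setOf_eq]
        constructor <;> rintro ⟨h1, h2⟩ <;> constructor
        · intro v hv; rw [← hZv v (by omega)]; exact h1 v hv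
        · intro u hu1 hu2; rw [← hZv u (by omega)]; exact h2 u hu1 hu2
        · intro v hv; rw [hZv v (by omega)]; exact h1 v hv
        · intro u hu1 hu2; rw [hZv u (by omega)]; exact h2 u hu1 hu2
      have hGanti : ∀ k, G (k + 1) ⊆ G k := by
        rintro k ω ⟨h1, h2⟩
        exact ⟨fun v hv => h1 v (by omega), fun u hu1 hu2 => h2 u hu1 (by omega)⟩
      have hGsub : SafeAll ∩ {ω | ∀ u, N < u → (Z u ω).2 ∉ Acc} ⊆ ⋂ k, G k := by
        rintro ω ⟨hsafe, hnoacc⟩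
        refine Set.mem_iInter.2 fun k => ⟨?_, fun u hu1 _ => hnoacc u hu1⟩
        exact Set.mem_iInter.1 hsafe (N + k + 1)
      apply measure_mono_null hGsub
      -- liveness values along the events
      set LV : ℕ → ENNReal := fun k =>
        ∫⁻ ω in G k, ENNReal.ofReal (Vlive (Z (N + k) ω)) ∂dInf with hLVdef
      -- coarse growth bound on the liveness certificate along safe trajectories
      have hWB : ∀ t : ℕ, ∫⁻ ω in AS (t + 1), ENNReal.ofReal (Vlive (Z t ω)) ∂dInf
          ≤ ENNReal.ofReal (Vlive (x₀, qinit)) + (t : ENNReal) * ENNReal.ofReal ML := by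
        intro t
        induction t with
        | zero =>
          simp only [Nat.cast_zero, zero_mul, add_zero]
          calc ∫⁻ ω in AS 1, ENNReal.ofReal (Vlive (Z 0 ω)) ∂dInf
              = ∫⁻ _ω in AS 1, ENNReal.ofReal (Vlive (x₀, qinit)) ∂dInf := rfl
            _ = ENNReal.ofReal (Vlive (x₀, qinit)) * dInf (AS 1) := setLIntegral_const _ _
            _ ≤ ENNReal.ofReal (Vlive (x₀, qinit)) * 1 := mul_le_mul_right prob_le_one _
            _ = ENNReal.ofReal (Vlive (x₀, qinit)) := mul_one _
        | succ t ih =>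
          have hASdep : ∀ ω ω' : ℕ → W, (∀ v, v ≤ t → Z v ω = Z v ω') →
              (ω ∈ AS (t + 1) ↔ ω' ∈ AS (t + 1)) := by
            intro ω ω' hZv
            simp only [hAS, Set.mem_setOf_eq]
            constructor <;> intro h v hv
            · rw [← hZv v (by omega)]; exact h v hv
            · rw [hZv v (by omega)]; exact h v hv
          calc ∫⁻ ω in AS (t + 1 + 1), ENNReal.ofReal (Vlive (Z (t + 1) ω)) ∂dInf
              ≤ ∫⁻ ω in AS (t + 1), ENNReal.ofReal (Vlive (Z (t + 1) ω)) ∂dInf :=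
                lintegral_mono_set (fun ω hω v hv => hω v (by omega))
            _ = ∫⁻ ω, (AS (t + 1)).indicator
                (fun ω => ∫⁻ w, ENNReal.ofReal (Vlive (F ((Z t ω).1, w), πA (Z t ω)))
                  ∂d) ω ∂dInf :=
                hsplit t (AS (t + 1)) (hASmeas (t + 1)) hASdep _ hVlive.ennreal_ofReal
            _ ≤ ∫⁻ ω, (AS (t + 1)).indicator
                (fun ω => ENNReal.ofReal (Vlive (Z t ω)) + ENNReal.ofReal ML) ω ∂dInf := by
                apply lintegral_mono
                intro ω
                by_cases hω : ω ∈ AS (t + 1)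
                · rw [Set.indicator_of_mem hω, Set.indicator_of_mem hω]
                  obtain ⟨hΔ', hae, hSint, hLint⟩ := hfiber t ω hω
                  have hnn : ∀ᵐ w ∂d, 0 ≤ Vlive (F ((Z t ω).1, w), πA (Z t ω)) := by
                    filter_upwards [hae] with w hw
                    exact hd _ _ hw.1
                  have hdr : drift (Z t ω).2 ≤ ML := by
                    rw [hdrift]
                    dsimp only
                    split
                    · exact le_refl ML
                    · linarith
                  have hfb := LDBSM.fiber_live_lintegral d _
                    (hIntLive (Z t ω).1 (πA (Z t ω))) hnn
                    (Vlive (Z t ω) + ML) (hLint.trans (by linarith))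
                  exact hfb.trans ENNReal.ofReal_add_le
                · rw [Set.indicator_of_notMem hω, Set.indicator_of_notMem hω]
            _ = ∫⁻ ω in AS (t + 1),
                  (ENNReal.ofReal (Vlive (Z t ω)) + ENNReal.ofReal ML) ∂dInf :=
                lintegral_indicator (hASmeas (t + 1)) _
            _ = (∫⁻ ω in AS (t + 1), ENNReal.ofReal (Vlive (Z t ω)) ∂dInf)
                  + ENNReal.ofReal ML * dInf (AS (t + 1)) := by
                rw [lintegral_add_right _ measurable_const, setLIntegral_const]
            _ ≤ (ENNReal.ofReal (Vlive (x₀, qinit)) + (t : ENNReal) * ENNReal.ofReal ML)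
                  + ENNReal.ofReal ML * 1 :=
                add_le_add ih (mul_le_mul_right prob_le_one _)
            _ = ENNReal.ofReal (Vlive (x₀, qinit))
                  + ((t : ℕ) + 1 : ENNReal) * ENNReal.ofReal ML := by
                rw [mul_one, add_mul, one_mul, add_assoc]
            _ = _ := by rw [Nat.cast_succ]
      have hWBfin : ∀ t : ℕ,
          ∫⁻ ω in AS (t + 1), ENNReal.ofReal (Vlive (Z t ω)) ∂dInf ≠ ⊤ := by
        intro t
        apply ne_top_of_le_ne_top _ (hWB t)
        exact ENNReal.add_ne_top.2 ⟨ENNReal.ofReal_ne_top,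
          ENNReal.mul_ne_top (ENNReal.natCast_ne_top t) ENNReal.ofReal_ne_top⟩
      have hLVle : ∀ k, LV k
          ≤ ∫⁻ ω in AS (N + k + 1), ENNReal.ofReal (Vlive (Z (N + k) ω)) ∂dInf :=
        fun k => lintegral_mono_set (fun ω hω => hω.1)
      have hLVfin : ∀ k, LV k ≠ ⊤ := fun k => ne_top_of_le_ne_top (hWBfin (N + k)) (hLVle k)
      -- strict decrease for `k ≥ 1`
      have hVge : ∀ k, 1 ≤ k → ∀ ω ∈ G k, εL ≤ Vlive (Z (N + k) ω) := by
        intro k hk ω hω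
        obtain ⟨hΔ', hae, hSint, hLint⟩ := hfiber (N + k) ω hω.1
        have hnoacc : (Z (N + k) ω).2 ∉ Acc := hω.2 (N + k) (by omega) (by omega)
        have hdr : drift (Z (N + k) ω).2 = -εL := by
          rw [hdrift]
          simp [hnoacc]
        rw [hdr] at hLint
        have hnn : ∀ᵐ w ∂d, 0 ≤ Vlive (F ((Z (N + k) ω).1, w), πA (Z (N + k) ω)) := by
          filter_upwards [hae] with w hw
          exact hd _ _ hw.1
        have h0 : 0 ≤ ∫ w, Vlive (F ((Z (N + k) ω).1, w), πA (Z (N + k) ω)) ∂d :=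
          integral_nonneg_of_ae hnn
        linarith
      have hLVstep : ∀ k : ℕ, 1 ≤ k →
          LV (k + 1) + ENNReal.ofReal εL * dInf (G k) ≤ LV k := by
        intro k hk
        have hle2 : ENNReal.ofReal εL * dInf (G k) ≤ LV k := by
          calc ENNReal.ofReal εL * dInf (G k)
              = ∫⁻ _ω in G k, ENNReal.ofReal εL ∂dInf := (setLIntegral_const _ _).symm
            _ ≤ LV k := setLIntegral_mono' (hGmeas k)
                (fun ω hω => ENNReal.ofReal_le_ofReal (hVge k hk ω hω))
        have hstep1 : LV (k + 1) ≤ LV k - ENNReal.ofReal εL * dInf (G k) := by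
          calc LV (k + 1)
              ≤ ∫⁻ ω in G k, ENNReal.ofReal (Vlive (Z (N + k + 1) ω)) ∂dInf :=
                lintegral_mono_set (hGanti k)
            _ = ∫⁻ ω, (G k).indicator
                (fun ω => ∫⁻ w, ENNReal.ofReal
                  (Vlive (F ((Z (N + k) ω).1, w), πA (Z (N + k) ω))) ∂d) ω ∂dInf :=
                hsplit (N + k) (G k) (hGmeas k) (hGdep k) _ hVlive.ennreal_ofReal
            _ ≤ ∫⁻ ω, (G k).indicator
                (fun ω => ENNReal.ofReal (Vlive (Z (N + k) ω)) - ENNReal.ofReal εL) ω ∂dInf := by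
                apply lintegral_mono
                intro ω
                by_cases hω : ω ∈ G k
                · rw [Set.indicator_of_mem hω, Set.indicator_of_mem hω]
                  obtain ⟨hΔ', hae, hSint, hLint⟩ := hfiber (N + k) ω hω.1
                  have hnoacc : (Z (N + k) ω).2 ∉ Acc := hω.2 (N + k) (by omega) (by omega)
                  have hdr : drift (Z (N + k) ω).2 = -εL := by
                    rw [hdrift]
                    simp [hnoacc]
                  rw [hdr] at hLint
                  have hnn : ∀ᵐ w ∂d,
                      0 ≤ Vlive (F ((Z (N + k) ω).1, w), πA (Z (N + k) ω)) := by
                    filter_upwards [hae] with w hw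
                    exact hd _ _ hw.1
                  have hfb := LDBSM.fiber_live_lintegral d _
                    (hIntLive (Z (N + k) ω).1 (πA (Z (N + k) ω))) hnn
                    (Vlive (Z (N + k) ω) - εL) (by linarith)
                  refine hfb.trans (le_of_eq ?_)
                  rw [ENNReal.ofReal_sub _ hεL.le]
                · rw [Set.indicator_of_notMem hω, Set.indicator_of_notMem hω]
            _ = ∫⁻ ω in G k,
                  (ENNReal.ofReal (Vlive (Z (N + k) ω)) - ENNReal.ofReal εL) ∂dInf :=
                lintegral_indicator (hGmeas k) _
            _ = LV k - ENNReal.ofReal εL * dInf (G k) := by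
                have hfin2 : ∫⁻ _ω in G k, ENNReal.ofReal εL ∂dInf ≠ ⊤ := by
                  rw [setLIntegral_const]
                  exact ENNReal.mul_ne_top ENNReal.ofReal_ne_top (measure_ne_top dInf _)
                have hle3 : (fun _ω : ℕ → W => ENNReal.ofReal εL)
                    ≤ᵐ[dInf.restrict (G k)]
                    fun ω => ENNReal.ofReal (Vlive (Z (N + k) ω)) := by
                  rw [Filter.EventuallyLE, ae_restrict_iff' (hGmeas k)]
                  exact ae_of_all _ fun ω hω => ENNReal.ofReal_le_ofReal (hVge k hk ω hω)
                rw [lintegral_sub measurable_const hfin2 hle3, setLIntegral_const]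
        calc LV (k + 1) + ENNReal.ofReal εL * dInf (G k)
            ≤ (LV k - ENNReal.ofReal εL * dInf (G k)) + ENNReal.ofReal εL * dInf (G k) :=
              add_le_add_left hstep1 _
          _ = LV k := tsub_add_cancel_of_le hle2
      -- telescoping
      have hGinfle : ∀ k, dInf (⋂ j, G j) ≤ dInf (G k) :=
        fun k => measure_mono (Set.iInter_subset G k)
      have htel : ∀ K : ℕ,
          LV (K + 1) + ENNReal.ofReal εL * ((K : ENNReal) * dInf (⋂ j, G j)) ≤ LV 1 := by
        intro K
        induction K with
        | zero => simp
        | succ K ih =>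
          have h1 := hLVstep (K + 1) (by omega)
          calc LV (K + 1 + 1) + ENNReal.ofReal εL * (((K + 1 : ℕ) : ENNReal) * dInf (⋂ j, G j))
              = (LV (K + 1 + 1) + ENNReal.ofReal εL * dInf (⋂ j, G j))
                + ENNReal.ofReal εL * ((K : ENNReal) * dInf (⋂ j, G j)) := by
                rw [Nat.cast_succ]
                ring
            _ ≤ (LV (K + 1 + 1) + ENNReal.ofReal εL * dInf (G (K + 1)))
                + ENNReal.ofReal εL * ((K : ENNReal) * dInf (⋂ j, G j)) :=
                add_le_add_left (add_le_add_right
                  (mul_le_mul_right (hGinfle (K + 1)) _) _) _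
            _ ≤ LV (K + 1) + ENNReal.ofReal εL * ((K : ENNReal) * dInf (⋂ j, G j)) :=
                add_le_add_left h1 _
            _ ≤ LV 1 := ih
      -- conclude that the intersection is null
      by_contra hne
      have hc0 : ENNReal.ofReal εL * dInf (⋂ j, G j) ≠ 0 := by
        apply mul_ne_zero
        · intro h
          rw [ENNReal.ofReal_eq_zero] at h
          linarith
        · exact hne
      have hcT : ENNReal.ofReal εL * dInf (⋂ j, G j) ≠ ⊤ :=
        ENNReal.mul_ne_top ENNReal.ofReal_ne_top (measure_ne_top _ _)
      have hbound : ∀ K : ℕ, (K : ENNReal) * (ENNReal.ofReal εL * dInf (⋂ j, G j)) ≤ LV 1 := by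
        intro K
        calc (K : ENNReal) * (ENNReal.ofReal εL * dInf (⋂ j, G j))
            = ENNReal.ofReal εL * ((K : ENNReal) * dInf (⋂ j, G j)) := by ring
          _ ≤ LV (K + 1) + ENNReal.ofReal εL * ((K : ENNReal) * dInf (⋂ j, G j)) :=
              le_add_self
          _ ≤ LV 1 := htel K
      have hdivfin : LV 1 / (ENNReal.ofReal εL * dInf (⋂ j, G j)) ≠ ⊤ := by
        intro htop
        rw [ENNReal.div_eq_top] at htop
        rcases htop with ⟨_, h2⟩ | ⟨h1, _⟩
        · exact hc0 h2
        · exact hLVfin 1 h1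
      obtain ⟨K, hK⟩ := ENNReal.exists_nat_gt hdivfin
      have hlt : LV 1 < (K : ENNReal) * (ENNReal.ofReal εL * dInf (⋂ j, G j)) :=
        (ENNReal.div_lt_iff (Or.inl hc0) (Or.inl hcT)).1 hK
      exact absurd (hbound K) (not_le.2 hlt)
    -- combine
    calc ENNReal.ofReal p ≤ dInf SafeAll := hSafeBound
      _ ≤ dInf (SafeAll ∩ {ω | {t | (Z t ω).2 ∈ Acc}.Infinite})
          + dInf (SafeAll ∩ {ω | ¬ {t | (Z t ω).2 ∈ Acc}.Infinite}) := by
          refine le_trans (measure_mono ?_) (measure_union_le _ _)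
          intro ω hω
          by_cases h : {t | (Z t ω).2 ∈ Acc}.Infinite
          · exact Or.inl ⟨hω, h⟩
          · exact Or.inr ⟨hω, h⟩
      _ = dInf (SafeAll ∩ {ω | {t | (Z t ω).2 ∈ Acc}.Infinite}) := by
          rw [hLiveNull, add_zero]
      _ ≤ dInf {ω | {t | (Z t ω).2 ∈ Acc}.Infinite} := measure_mono Set.inter_subset_right
  · -- monotonicity: an accepting product trajectory yields an accepting run
    apply measure_mono
    intro ω hω
    simp only [Set.mem_setOf_eq] at hω ⊢
    refine ⟨fun t => (Z t ω).2, rfl, ?_, hω⟩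
    intro t
    have hcomp : (L ∘ traj F x₀ ω) t = L (Z t ω).1 := by
      simp only [Function.comp_apply, htraj]
    rw [hcomp]
    show (Z (t + 1) ω).2 ∈ _
    rw [hZsucc]
    exact hπΔ (Z t ω).1 (Z t ω).2
end

section
/- Quantitative safety of the stochastic invariant: assume the LDBSM conditions (a)–(f) hold. Then there exists an automaton-controller π^A such that for every x₀ ∈ Init, d^∞({ω : ℕ → W | for all t ∈ ℕ, V^safe(x_t, q_t) < 0}) ≥ 1 − exp(8·η^S·ε^S/(M^S)²), where (x_t, q_t) is the product trajectory from (x₀, q_init) under π^A and ω. -/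
open MeasureTheory

/-! ### Auxiliary results -/

/-- Core two-point inequality behind Hoeffding's lemma. -/
lemma ldbsm_key_two_point {p : ℝ} (hp0 : 0 ≤ p) (hp1 : p ≤ 1) {h : ℝ} (hh : 0 ≤ h) :
    1 - p + p * Real.exp h ≤ Real.exp (p * h + h ^ 2 / 8) := by
  set D : ℝ → ℝ := fun s => 1 - p + p * Real.exp s with hDdef
  have hD : ∀ s, 0 < D s := by
    intro s
    rcases eq_or_lt_of_le hp1 with rfl | h1
    · simp only [hDdef, sub_self, zero_add, one_mul]
      positivity
    · have : 0 ≤ p * Real.exp s := mul_nonneg hp0 (Real.exp_pos s).le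
      simp only [hDdef]; linarith
  have hDeriv : ∀ s, HasDerivAt D (p * Real.exp s) s := by
    intro s
    exact ((Real.hasDerivAt_exp s).const_mul p).const_add (1 - p)
  set q : ℝ → ℝ := fun s => p * Real.exp s / D s with hqdef
  have hq0 : ∀ s, 0 ≤ q s := fun s =>
    div_nonneg (mul_nonneg hp0 (Real.exp_pos s).le) (hD s).le
  have hq1 : ∀ s, q s ≤ 1 := by
    intro s
    rw [hqdef, div_le_one (hD s)]
    have := (Real.exp_pos s).le
    simp only [hDdef]; linarith
  have hqD : ∀ s, HasDerivAt q (q s * (1 - q s)) s := by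
    intro s
    have h1 : HasDerivAt (fun s => p * Real.exp s) (p * Real.exp s) s :=
      (Real.hasDerivAt_exp s).const_mul p
    have h2 := h1.div (hDeriv s) (hD s).ne'
    have hne : D s ≠ 0 := (hD s).ne'
    have heq : (p * Real.exp s * D s - p * Real.exp s * (p * Real.exp s)) / D s ^ 2
        = q s * (1 - q s) := by
      show _ = p * Real.exp s / D s * (1 - p * Real.exp s / D s)
      rw [one_sub_div hne, div_mul_div_comm, sq]
      congr 1
      ring
    rw [← heq]
    exact h2
  -- level 1 : q s ≤ p + s/4 for s ≥ 0
  have hpsi : ∀ s : ℝ, 0 ≤ s → q s ≤ p + s / 4 := by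
    have hanti : Antitone (fun s => q s - s / 4) := by
      refine antitone_of_hasDerivAt_nonpos (f' := fun s => q s * (1 - q s) - 1 / 4) ?_ ?_
      · intro s
        exact (hqD s).sub ((hasDerivAt_id s).div_const 4)
      · intro s
        have h0 := hq0 s; have h1 := hq1 s
        show q s * (1 - q s) - 1 / 4 ≤ (0 : ℝ → ℝ) s
        simp only [Pi.zero_apply]
        nlinarith [sq_nonneg (q s - 1 / 2)]
    intro s hs
    have h0 : q 0 = p := by
      simp [hqdef, hDdef, Real.exp_zero]
    have := hanti hs
    simp only [h0] at this ⊢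
    linarith [this, h0]
  -- level 2 : log (D h) ≤ p h + h^2/8 on [0, ∞)
  set φ : ℝ → ℝ := fun s => p * s + s ^ 2 / 8 - Real.log (D s) with hφdef
  have hφD : ∀ s, HasDerivAt φ (p + s / 4 - q s) s := by
    intro s
    have h1 : HasDerivAt (fun s : ℝ => p * s) p s := by
      simpa using (hasDerivAt_id s).const_mul p
    have h2 : HasDerivAt (fun s : ℝ => s ^ 2 / 8) (s / 4) s := by
      have := (hasDerivAt_pow 2 s).div_const 8
      exact this.congr_deriv (by ring)
    have h3 : HasDerivAt (fun s => Real.log (D s)) (p * Real.exp s / D s) s :=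
      (hDeriv s).log (hD s).ne'
    exact (h1.add h2).sub h3
  have hφmono : MonotoneOn φ (Set.Ici (0 : ℝ)) := by
    refine monotoneOn_of_hasDerivWithinAt_nonneg (convex_Ici 0)
      (Continuous.continuousOn ?_) (f' := fun s => p + s / 4 - q s) ?_ ?_
    · exact Differentiable.continuous fun s => (hφD s).differentiableAt
    · intro x hx
      exact (hφD x).hasDerivWithinAt
    · intro x hx
      rw [interior_Ici] at hx
      have := hpsi x (le_of_lt hx)
      linarith
  have hφ0 : φ 0 = 0 := by
    simp [hφdef, hDdef, Real.exp_zero]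
  have hφh : 0 ≤ φ h := by
    have := hφmono (Set.self_mem_Ici) (Set.mem_Ici.2 hh) hh
    rw [hφ0] at this; exact this
  have hlog : Real.log (D h) ≤ p * h + h ^ 2 / 8 := by
    simp only [hφdef] at hφh; linarith
  calc D h = Real.exp (Real.log (D h)) := (Real.exp_log (hD h)).symm
    _ ≤ Real.exp (p * h + h ^ 2 / 8) := Real.exp_le_exp.2 hlog

/-- Hoeffding's lemma (integral form). -/
lemma ldbsm_hoeffding {W : Type*} [MeasurableSpace W] (d : Measure W) [IsProbabilityMeasure d]
    {f : W → ℝ} (hf : Integrable f d) {a b c : ℝ} (hab : a < b) (hc : 0 ≤ c)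
    (hfa : ∀ᵐ w ∂d, a ≤ f w) (hfb : ∀ᵐ w ∂d, f w ≤ b) :
    ∫ w, Real.exp (c * f w) ∂d ≤
      Real.exp (c * (∫ w, f w ∂d) + c ^ 2 * (b - a) ^ 2 / 8) := by
  have hba : (0:ℝ) < b - a := by linarith
  set m : ℝ := ∫ w, f w ∂d with hm
  have hconst : ∀ r : ℝ, ∫ (_ : W), r ∂d = r := by
    intro r; simp
  have hma : a ≤ m := by
    rw [hm, ← hconst a]
    exact integral_mono_ae (integrable_const a) hf hfa
  have hmb : m ≤ b := by
    rw [hm, ← hconst b]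
    exact integral_mono_ae hf (integrable_const b) hfb
  set C0 : ℝ := (b * Real.exp (c * a) - a * Real.exp (c * b)) / (b - a) with hC0
  set C1 : ℝ := (Real.exp (c * b) - Real.exp (c * a)) / (b - a) with hC1
  have hgint : Integrable (fun w => C0 + f w * C1) d :=
    (integrable_const C0).add (hf.mul_const C1)
  have hexpint : Integrable (fun w => Real.exp (c * f w)) d := by
    refine Integrable.mono' (integrable_const (Real.exp (c * b)))
      (Real.continuous_exp.comp_aestronglyMeasurable
        (hf.aestronglyMeasurable.const_mul c)) ?_
    filter_upwards [hfb] with w hw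
    rw [Real.norm_eq_abs, abs_of_pos (Real.exp_pos _)]
    exact Real.exp_le_exp.2 (mul_le_mul_of_nonneg_left hw hc)
  have hpoint : ∀ᵐ w ∂d, Real.exp (c * f w) ≤ C0 + f w * C1 := by
    filter_upwards [hfa, hfb] with w hwa hwb
    have hl0 : 0 ≤ (b - f w) / (b - a) := div_nonneg (by linarith) hba.le
    have hl1 : 0 ≤ (f w - a) / (b - a) := div_nonneg (by linarith) hba.le
    have hsum : (b - f w) / (b - a) + (f w - a) / (b - a) = 1 := by
      field_simp
      ring
    have hconv := convexOn_exp.2 (Set.mem_univ (c * a)) (Set.mem_univ (c * b)) hl0 hl1 hsum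
    simp only [smul_eq_mul] at hconv
    have harg : (b - f w) / (b - a) * (c * a) + (f w - a) / (b - a) * (c * b) = c * f w := by
      field_simp
      ring
    rw [harg] at hconv
    refine hconv.trans (le_of_eq ?_)
    rw [hC0, hC1]
    field_simp
    ring
  have hstep1 : ∫ w, Real.exp (c * f w) ∂d ≤ C0 + m * C1 := by
    have := integral_mono_ae hexpint hgint hpoint
    rwa [integral_add (integrable_const C0) (hf.mul_const C1), hconst,
      integral_mul_const] at this
  set p : ℝ := (m - a) / (b - a) with hp
  have hp0 : 0 ≤ p := div_nonneg (by linarith) hba.le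
  have hp1 : p ≤ 1 := by
    rw [hp, div_le_one hba]; linarith
  set hh : ℝ := c * (b - a) with hhdef
  have hh0 : 0 ≤ hh := mul_nonneg hc hba.le
  have hkey := ldbsm_key_two_point hp0 hp1 hh0
  have hrw : C0 + m * C1 = Real.exp (c * a) * (1 - p + p * Real.exp hh) := by
    have : c * b = c * a + hh := by rw [hhdef]; ring
    rw [hC0, hC1, hp, this, Real.exp_add]
    field_simp
    ring
  have hfinal : Real.exp (c * a) * Real.exp (p * hh + hh ^ 2 / 8) =
      Real.exp (c * m + c ^ 2 * (b - a) ^ 2 / 8) := by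
    rw [← Real.exp_add]
    congr 1
    rw [hp, hhdef]
    field_simp
    ring
  calc ∫ w, Real.exp (c * f w) ∂d ≤ C0 + m * C1 := hstep1
    _ = Real.exp (c * a) * (1 - p + p * Real.exp hh) := hrw
    _ ≤ Real.exp (c * a) * Real.exp (p * hh + hh ^ 2 / 8) :=
        mul_le_mul_of_nonneg_left hkey (Real.exp_pos _).le
    _ = Real.exp (c * m + c ^ 2 * (b - a) ^ 2 / 8) := hfinal

section Glue
variable {W : Type*} [MeasurableSpace W]

/-- Rectangular cylinder sets in `ℕ → W`. -/
def ldbsmRect (W : Type*) [MeasurableSpace W] : Set (Set (ℕ → W)) :=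
  {S | ∃ (n : ℕ) (t : ℕ → Set W), (∀ i, MeasurableSet (t i)) ∧
    S = {ω : ℕ → W | ∀ i < n, ω i ∈ t i}}

lemma ldbsmRect_isPiSystem : IsPiSystem (ldbsmRect W) := by
  rintro S ⟨n, t, ht, rfl⟩ T ⟨m, u, hu, rfl⟩ -
  refine ⟨max n m, fun i => (if i < n then t i else Set.univ) ∩ (if i < m then u i else Set.univ),
    fun i => MeasurableSet.inter (by by_cases h : i < n <;> simp [h, ht i])
      (by by_cases h : i < m <;> simp [h, hu i]), ?_⟩
  ext ω
  simp only [Set.mem_inter_iff, Set.mem_setOf_eq]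
  constructor
  · rintro ⟨h1, h2⟩ i hi
    constructor
    · by_cases h : i < n <;> simp [h, h1 i]
    · by_cases h : i < m <;> simp [h, h2 i]
  · intro h
    constructor
    · intro i hi
      have := (h i (lt_of_lt_of_le hi (le_max_left n m))).1
      rwa [if_pos hi] at this
    · intro i hi
      have := (h i (lt_of_lt_of_le hi (le_max_right n m))).2
      rwa [if_pos hi] at this

lemma ldbsmRect_gen : (MeasurableSpace.pi : MeasurableSpace (ℕ → W)) =
    MeasurableSpace.generateFrom (ldbsmRect W) := by
  apply le_antisymm
  · rw [MeasurableSpace.pi]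
    refine iSup_le fun i => ?_
    rintro s ⟨u, hu, rfl⟩
    apply MeasurableSpace.measurableSet_generateFrom
    refine ⟨i + 1, fun j => if j = i then u else Set.univ, fun j => ?_, ?_⟩
    · by_cases h : j = i <;> simp [h, hu]
    · ext ω
      simp only [Set.mem_preimage, Set.mem_setOf_eq]
      constructor
      · intro h j hj
        by_cases hji : j = i <;> simp [hji, h]
      · intro h
        have := h i (Nat.lt_succ_self i)
        simpa using this
  · refine MeasurableSpace.generateFrom_le ?_
    rintro S ⟨n, t, ht, rfl⟩
    have : {ω : ℕ → W | ∀ i < n, ω i ∈ t i} =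
        ⋂ i, ⋂ (_ : i < n), (fun ω : ℕ → W => ω i) ⁻¹' t i := by
      ext ω; simp
    rw [this]
    exact MeasurableSet.iInter fun i => MeasurableSet.iInter fun _ =>
      (measurable_pi_apply i) (ht i)

lemma ldbsmRect_spanning : IsCountablySpanning (ldbsmRect W) :=
  ⟨fun _ => Set.univ, fun _ => ⟨0, fun _ => Set.univ, fun _ => MeasurableSet.univ, by simp⟩,
    by simpa using Set.iUnion_const Set.univ⟩

/-- The "head/tail" decomposition map. -/
def ldbsmShift (W : Type*) : (ℕ → W) → W × (ℕ → W) := fun ω => (ω 0, fun n => ω (n + 1))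

lemma ldbsmShift_measurable : Measurable (ldbsmShift W) :=
  (measurable_pi_apply 0).prodMk (measurable_pi_lambda _ fun n => measurable_pi_apply (n + 1))

/-- The head/tail decomposition of `dInf` is `d ⊗ dInf`. -/
lemma ldbsm_map_shift {d : Measure W} [IsProbabilityMeasure d]
    {dInf : Measure (ℕ → W)} [IsProbabilityMeasure dInf]
    (hdInf : ∀ (n : ℕ) (s : ℕ → Set W), (∀ i, MeasurableSet (s i)) →
      dInf {ω | ∀ i < n, ω i ∈ s i} = ∏ i ∈ Finset.range n, d (s i)) :
    dInf.map (ldbsmShift W) = d.prod dInf := by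
  have hmeas := ldbsmShift_measurable (W := W)
  haveI : IsProbabilityMeasure (dInf.map (ldbsmShift W)) :=
    Measure.isProbabilityMeasure_map hmeas.aemeasurable
  refine ext_of_generate_finite
    (Set.image2 (· ×ˢ ·) {s : Set W | MeasurableSet s} (ldbsmRect W)) ?_ ?_ ?_ ?_
  · exact (generateFrom_eq_prod MeasurableSpace.generateFrom_measurableSet
      ldbsmRect_gen.symm isCountablySpanning_measurableSet ldbsmRect_spanning).symm
  · exact IsPiSystem.prod MeasurableSpace.isPiSystem_measurableSet ldbsmRect_isPiSystem
  · rintro _ ⟨s, hs, T, ⟨n, t, ht, rfl⟩, rfl⟩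
    have hTmeas : MeasurableSet {ω : ℕ → W | ∀ i < n, ω i ∈ t i} := by
      rw [ldbsmRect_gen]
      exact MeasurableSpace.measurableSet_generateFrom ⟨n, t, ht, rfl⟩
    rw [Measure.map_apply hmeas (hs.prod hTmeas), Measure.prod_prod,
      hdInf n t ht]
    set u : ℕ → Set W := fun j => match j with | 0 => s | Nat.succ k => t k with hudef
    have hpre : ldbsmShift W ⁻¹' (s ×ˢ {ω : ℕ → W | ∀ i < n, ω i ∈ t i}) =
        {ω : ℕ → W | ∀ i < n + 1, ω i ∈ u i} := by
      ext ω
      simp only [ldbsmShift, Set.mem_preimage, Set.mem_prod, Set.mem_setOf_eq]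
      constructor
      · rintro ⟨h0, h1⟩ i hi
        cases i with
        | zero => exact h0
        | succ j => exact h1 j (by omega)
      · intro h
        exact ⟨h 0 (by omega), fun j hj => h (j + 1) (by omega)⟩
    rw [hpre, hdInf (n + 1) u (fun i => by cases i with | zero => exact hs | succ k => exact ht k),
      Finset.prod_range_succ']
    simp only [hudef]
    rw [mul_comm]
  · simp

end Glue

open Classical in
/-- Select the first element of the list lying in the corresponding set, with a fallback. -/
noncomputable def ldbsmSel {X Q : Type*} (M : Q → Set X) (dflt : X → Q) : List Q → X → Q
  | [], x => dflt x
  | q :: l, x => if x ∈ M q then q else ldbsmSel M dflt l x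

lemma ldbsmSel_measurable {X Q : Type*} [MeasurableSpace X] [MeasurableSpace Q]
    {M : Q → Set X} {dflt : X → Q} (hM : ∀ q, MeasurableSet (M q))
    (hdflt : Measurable dflt) : ∀ l : List Q, Measurable (ldbsmSel M dflt l)
  | [] => hdflt
  | q :: l => by
    have ih := ldbsmSel_measurable hM hdflt l
    simp only [ldbsmSel]
    exact Measurable.ite (hM q) measurable_const ih

lemma ldbsmSel_spec {X Q : Type*} {M : Q → Set X} {dflt : X → Q} {x : X} :
    ∀ l : List Q, (∃ q ∈ l, x ∈ M q) → x ∈ M (ldbsmSel M dflt l x)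
  | [], h => by simp at h
  | q :: l, h => by
    simp only [ldbsmSel]
    split
    · assumption
    · rcases h with ⟨q', hq', hxq'⟩
      rcases List.mem_cons.1 hq' with rfl | hmem
      · exact absurd hxq' (by assumption)
      · exact ldbsmSel_spec l ⟨q', hmem, hxq'⟩

lemma ldbsmSel_mem {X Q : Type*} {M : Q → Set X} {dflt : X → Q} {x : X} {S : Set Q}
    (h1 : ∀ q, x ∈ M q → q ∈ S) (h2 : dflt x ∈ S) :
    ∀ l : List Q, ldbsmSel M dflt l x ∈ S
  | [] => h2
  | q :: l => by
    simp only [ldbsmSel]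
    split
    · exact h1 q (by assumption)
    · exact ldbsmSel_mem h1 h2 l

lemma ldbsm_prodTraj_measurable {X W Q Z : Type*} [MeasurableSpace X] [MeasurableSpace W]
    [MeasurableSpace Q] [MeasurableSpace Z]
    {F : X × W → X} {πA : X × Q → Q} (hF : Measurable F) (hπA : Measurable πA)
    {ξ : Z → X} (hξ : Measurable ξ) (q0 : Q) {ν : Z → ℕ → W} (hν : Measurable ν) :
    ∀ t, Measurable fun z => prodTraj F πA (ξ z) q0 (ν z) t
  | 0 => hξ.prodMk measurable_const
  | t + 1 => by
    have ih := ldbsm_prodTraj_measurable hF hπA hξ q0 hν t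
    show Measurable fun z => (F ((prodTraj F πA (ξ z) q0 (ν z) t).1, ν z t),
      πA (prodTraj F πA (ξ z) q0 (ν z) t))
    exact (hF.comp ((measurable_fst.comp ih).prodMk
      ((measurable_pi_apply t).comp hν))).prodMk (hπA.comp ih)

lemma ldbsm_prodTraj_shift {X W Q : Type*} (F : X × W → X) (πA : X × Q → Q) (x : X) (q : Q)
    (ω : ℕ → W) : ∀ t, prodTraj F πA x q ω (t + 1) =
      prodTraj F πA (F (x, ω 0)) (πA (x, q)) (fun n => ω (n + 1)) t
  | 0 => rfl
  | t + 1 => by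
    show (F ((prodTraj F πA x q ω (t + 1)).1, ω (t + 1)), πA (prodTraj F πA x q ω (t + 1))) = _
    rw [ldbsm_prodTraj_shift F πA x q ω t]
    rfl

theorem ldbsm_quantitative_safety
    {X W Q A : Type*}
    [MeasurableSpace X] [MeasurableSpace W]
    [Fintype Q] [MeasurableSpace Q] [DiscreteMeasurableSpace Q]
    [Fintype A] [MeasurableSpace A] [DiscreteMeasurableSpace A]
    (d : Measure W) [IsProbabilityMeasure d]
    (dInf : Measure (ℕ → W)) [IsProbabilityMeasure dInf]
    (hdInf : ∀ (n : ℕ) (s : ℕ → Set W), (∀ i, MeasurableSet (s i)) →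
      dInf {ω | ∀ i < n, ω i ∈ s i} = ∏ i ∈ Finset.range n, d (s i))
    (F : X × W → X) (hF : Measurable F)
    (qinit : Q) (Δ : Q → A → Set Q) (hΔ : ∀ q σ, (Δ q σ).Nonempty)
    (Acc : Set Q)
    (L : X → A) (hL : Measurable L)
    (Init : Set X) (I : Set (X × Q)) (hI : MeasurableSet I)
    (Vsafe Vlive : X × Q → ℝ)
    (hVsafe : Measurable Vsafe) (hVlive : Measurable Vlive)
    (hIntSafe : ∀ (x : X) (q' : Q), Integrable (fun w => Vsafe (F (x, w), q')) d)
    (hIntLive : ∀ (x : X) (q' : Q), Integrable (fun w => Vlive (F (x, w), q')) d)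
    (ηS εS MS βS εL ML : ℝ)
    (hηS : ηS ≤ 0) (hεS : 0 < εS) (hMS : 0 < MS) (hεL : 0 < εL) (hML : 0 < ML)
    -- (a) Initial condition of the invariant
    (ha : ∀ x ∈ Init, (x, qinit) ∈ I)
    -- (b) Initial condition of the safety certificate
    (hb : ∀ x ∈ Init, Vsafe (x, qinit) ≤ ηS)
    -- (c) Safety condition of the safety certificate
    (hc : ∀ x q, (x, q) ∈ I → q ∈ Qreject Δ Acc → 0 ≤ Vsafe (x, q))
    -- (d) Non-negativity condition of the liveness certificate
    (hd : ∀ x q, (x, q) ∈ I → 0 ≤ Vlive (x, q))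
    -- (e) Strict expected decrease of the liveness certificate
    (he : ∀ x q, (x, q) ∈ I → q ∉ Acc ∪ Qreject Δ Acc → Vsafe (x, q) ≤ 0 →
      ∃ σ q', q' ∈ Δ q σ ∧ SafetyCond d F L I Vsafe εS MS βS x q σ q' ∧
        (∫ w, Vlive (F (x, w), q') ∂d) ≤ Vlive (x, q) - εL)
    -- (f) Bounded expected increase of the liveness certificate
    (hf : ∀ x q, (x, q) ∈ I → q ∈ Acc → Vsafe (x, q) ≤ 0 →
      ∃ σ q', q' ∈ Δ q σ ∧ SafetyCond d F L I Vsafe εS MS βS x q σ q' ∧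
        (∫ w, Vlive (F (x, w), q') ∂d) ≤ Vlive (x, q) + ML) :
    ∃ πA : X × Q → Q, Measurable πA ∧ (∀ x q, πA (x, q) ∈ Δ q (L x)) ∧
      ∀ x₀ ∈ Init,
        ENNReal.ofReal (1 - Real.exp (8 * ηS * εS / MS ^ 2)) ≤
          dInf {ω | ∀ t, Vsafe (prodTraj F πA x₀ qinit ω t) < 0} := by
  classical
  set c : ℝ := 8 * εS / MS ^ 2 with hcdef
  have hcpos : 0 < c := by positivity
  -- the good kernel sets
  set G : Q → Q → Set (X × W) := fun q q' =>
    {p : X × W | (F p, q') ∈ I ∧ βS ≤ Vsafe (p.1, q) - Vsafe (F p, q') ∧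
      Vsafe (p.1, q) - Vsafe (F p, q') ≤ βS + MS} with hGdef
  have hGmeas : ∀ q q', MeasurableSet (G q q') := by
    intro q q'
    have m1 : Measurable fun p : X × W => (F p, q') := hF.prodMk measurable_const
    have m2 : Measurable fun p : X × W => Vsafe (p.1, q) - Vsafe (F p, q') :=
      (hVsafe.comp (measurable_fst.prodMk measurable_const)).sub (hVsafe.comp m1)
    simp only [hGdef, Set.setOf_and]
    exact (m1 hI).inter ((measurableSet_le measurable_const m2).inter
      (measurableSet_le m2 measurable_const))
  have hIntMeas : ∀ q' : Q, Measurable fun x => ∫ w, Vsafe (F (x, w), q') ∂d := by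
    intro q'
    have : StronglyMeasurable fun p : X × W => Vsafe (F p, q') :=
      (hVsafe.comp (hF.prodMk measurable_const)).stronglyMeasurable
    exact this.integral_prod_right'.measurable
  -- the measurable surrogate of the safety condition
  set M : Q → Q → Set X := fun q q' => {x | q' ∈ Δ q (L x) ∧ d {w | (x, w) ∈ G q q'} = 1 ∧
    (∫ w, Vsafe (F (x, w), q') ∂d) ≤ Vsafe (x, q) - εS} with hMdef
  have hMmeas : ∀ q q', MeasurableSet (M q q') := by
    intro q q'
    simp only [hMdef, Set.setOf_and]
    refine MeasurableSet.inter ?_ (MeasurableSet.inter ?_ ?_)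
    · exact hL (MeasurableSet.of_discrete (s := {a | q' ∈ Δ q a}))
    · exact (measurable_measure_prodMk_left (hGmeas q q')) (measurableSet_singleton 1)
    · exact measurableSet_le (hIntMeas q')
        ((hVsafe.comp (measurable_id.prodMk measurable_const)).sub measurable_const)
  -- the controller
  set dflt : Q → X → Q := fun q x => (hΔ q (L x)).some with hdfltdef
  have hdfltMeas : ∀ q, Measurable (dflt q) := fun q =>
    (Measurable.of_discrete (f := fun a => (hΔ q a).some)).comp hL
  set es : List Q := Finset.univ.toList with hesdef
  set sel : Q → X → Q := fun q => ldbsmSel (M q) (dflt q) es with hseldef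
  have hselMeas : ∀ q, Measurable (sel q) := fun q =>
    ldbsmSel_measurable (hMmeas q) (hdfltMeas q) es
  set πA : X × Q → Q := fun p => sel p.2 p.1 with hπAdef
  have hπAmeas : Measurable πA := by
    apply measurable_to_countable'
    intro q0
    have hset : πA ⁻¹' {q0} = ⋃ q : Q, ((sel q ⁻¹' {q0}) ×ˢ ({q} : Set Q)) := by
      ext ⟨x, q⟩
      simp only [hπAdef, Set.mem_preimage, Set.mem_singleton_iff, Set.mem_iUnion,
        Set.mem_prod]
      constructor
      · intro h; exact ⟨q, h, rfl⟩
      · rintro ⟨q1, h1, rfl⟩; exact h1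
    rw [hset]
    exact MeasurableSet.iUnion fun q =>
      ((hselMeas q) (measurableSet_singleton q0)).prod (measurableSet_singleton q)
  have hπΔ : ∀ x q, πA (x, q) ∈ Δ q (L x) := by
    intro x q
    refine ldbsmSel_mem (S := Δ q (L x)) ?_ ?_ es
    · intro q' hq'; exact hq'.1
    · exact (hΔ q (L x)).some_mem
  have hπΨ : ∀ x q, (x, q) ∈ I → Vsafe (x, q) < 0 → x ∈ M q (πA (x, q)) := by
    intro x q hxI hV
    apply ldbsmSel_spec
    have hnr : q ∉ Qreject Δ Acc := fun hq => absurd (hc x q hxI hq) (not_le.2 hV)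
    have hSC : ∃ σ q', q' ∈ Δ q σ ∧ SafetyCond d F L I Vsafe εS MS βS x q σ q' := by
      rcases em (q ∈ Acc) with hAcc | hAcc
      · obtain ⟨σ, q', hq'Δ, hS, -⟩ := hf x q hxI hAcc hV.le
        exact ⟨σ, q', hq'Δ, hS⟩
      · obtain ⟨σ, q', hq'Δ, hS, -⟩ := he x q hxI (by
          rw [Set.mem_union]; rintro (h | h) <;> [exact hAcc h; exact hnr h]) hV.le
        exact ⟨σ, q', hq'Δ, hS⟩
    obtain ⟨σ, q', hq'Δ, hLx, hInv, hdec, hbnd⟩ := hSC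
    refine ⟨q', by rw [hesdef]; exact Finset.mem_toList.2 (Finset.mem_univ q'), ?_⟩
    refine ⟨by rw [hLx]; exact hq'Δ, ?_, hdec⟩
    have huniv : {w | (x, w) ∈ G q q'} = Set.univ := by
      ext w
      simp only [hGdef, Set.mem_setOf_eq, Set.mem_univ, iff_true]
      exact ⟨hInv w, (hbnd w).1, (hbnd w).2⟩
    rw [huniv]
    exact measure_univ
  -- main induction: probability of hitting `0 ≤ Vsafe` within `T` steps
  have hmain : ∀ (T : ℕ) (x : X) (q : Q), (x, q) ∈ I → Vsafe (x, q) < 0 →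
      dInf {ω | ∃ t ≤ T, 0 ≤ Vsafe (prodTraj F πA x q ω t)} ≤
        ENNReal.ofReal (Real.exp (c * Vsafe (x, q))) := by
    intro T
    induction T with
    | zero =>
      intro x q hxI hV
      have hempty : {ω : ℕ → W | ∃ t ≤ 0, 0 ≤ Vsafe (prodTraj F πA x q ω t)} = ∅ := by
        ext ω
        simp only [Set.mem_setOf_eq, Set.mem_empty_iff_false, iff_false, not_exists, not_and]
        intro t ht
        obtain rfl : t = 0 := Nat.le_zero.1 ht
        exact not_le.2 hV
      rw [hempty]
      simp
    | succ T ih =>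
      intro x q hxI hV
      obtain ⟨hq'Δ, hGone, hdec⟩ := hπΨ x q hxI hV
      set q' := πA (x, q) with hq'def
      have hGsec : MeasurableSet {w | (x, w) ∈ G q q'} :=
        measurable_prodMk_left (hGmeas q q')
      have hGae : ∀ᵐ w ∂d, (x, w) ∈ G q q' := by
        rw [MeasureTheory.ae_iff]
        have : {w | ¬ (x, w) ∈ G q q'} = {w | (x, w) ∈ G q q'}ᶜ := rfl
        rw [this, prob_compl_eq_one_sub hGsec, hGone]
        simp
      set S : Set (W × (ℕ → W)) :=
        {pw | ∃ t ≤ T, 0 ≤ Vsafe (prodTraj F πA (F (x, pw.1)) q' pw.2 t)} with hSdef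
      have hSmeas : MeasurableSet S := by
        have hrw : S = ⋃ t, ⋃ (_ : t ≤ T),
            {pw : W × (ℕ → W) | 0 ≤ Vsafe (prodTraj F πA (F (x, pw.1)) q' pw.2 t)} := by
          ext pw; simp [hSdef]
        rw [hrw]
        refine MeasurableSet.iUnion fun t => MeasurableSet.iUnion fun _ => ?_
        exact measurableSet_le measurable_const (hVsafe.comp
          (ldbsm_prodTraj_measurable hF hπAmeas
            (hF.comp (measurable_const.prodMk measurable_fst)) q' measurable_snd t))
      have hEq : {ω : ℕ → W | ∃ t ≤ T + 1, 0 ≤ Vsafe (prodTraj F πA x q ω t)} =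
          ldbsmShift W ⁻¹' S := by
        ext ω
        simp only [Set.mem_setOf_eq, Set.mem_preimage, hSdef, ldbsmShift]
        constructor
        · rintro ⟨t, ht, h0⟩
          cases t with
          | zero => exact absurd h0 (not_le.2 hV)
          | succ s =>
            exact ⟨s, by omega, by rwa [ldbsm_prodTraj_shift] at h0⟩
        · rintro ⟨t, ht, h0⟩
          exact ⟨t + 1, by omega, by rwa [ldbsm_prodTraj_shift]⟩
      rw [hEq, ← Measure.map_apply (ldbsmShift_measurable) hSmeas, ldbsm_map_shift hdInf,
        Measure.prod_apply hSmeas]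
      have hbound : ∀ᵐ w ∂d, dInf (Prod.mk w ⁻¹' S) ≤
          ENNReal.ofReal (Real.exp (c * Vsafe (F (x, w), q'))) := by
        filter_upwards [hGae] with w hw
        rcases lt_or_ge (Vsafe (F (x, w), q')) 0 with h0 | h0
        · exact ih (F (x, w)) q' hw.1 h0
        · refine le_trans prob_le_one ?_
          rw [ENNReal.one_le_ofReal]
          exact Real.one_le_exp (mul_nonneg hcpos.le h0)
      refine le_trans (lintegral_mono_ae hbound) ?_
      have hfb : ∀ᵐ w ∂d, Vsafe (F (x, w), q') ≤ Vsafe (x, q) - βS := by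
        filter_upwards [hGae] with w hw
        have := hw.2.1; linarith
      have hfa : ∀ᵐ w ∂d, Vsafe (x, q) - βS - MS ≤ Vsafe (F (x, w), q') := by
        filter_upwards [hGae] with w hw
        have := hw.2.2; linarith
      have hfint := hIntSafe x q'
      have hexpint : Integrable (fun w => Real.exp (c * Vsafe (F (x, w), q'))) d := by
        refine Integrable.mono' (integrable_const (Real.exp (c * (Vsafe (x, q) - βS))))
          (Real.continuous_exp.comp_aestronglyMeasurable
            (hfint.aestronglyMeasurable.const_mul c)) ?_
        filter_upwards [hfb] with w hw
        rw [Real.norm_eq_abs, abs_of_pos (Real.exp_pos _)]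
        exact Real.exp_le_exp.2 (mul_le_mul_of_nonneg_left hw hcpos.le)
      rw [← ofReal_integral_eq_lintegral_ofReal hexpint
        (Filter.Eventually.of_forall fun w => (Real.exp_pos _).le)]
      apply ENNReal.ofReal_le_ofReal
      have hhoef := ldbsm_hoeffding d hfint (a := Vsafe (x, q) - βS - MS)
        (b := Vsafe (x, q) - βS) (c := c) (by linarith) hcpos.le hfa hfb
      have hba : (Vsafe (x, q) - βS) - (Vsafe (x, q) - βS - MS) = MS := by ring
      rw [hba] at hhoef
      refine hhoef.trans ?_
      rw [Real.exp_le_exp]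
      have h1 : c * (∫ w, Vsafe (F (x, w), q') ∂d) ≤ c * (Vsafe (x, q) - εS) :=
        mul_le_mul_of_nonneg_left hdec hcpos.le
      have hMSne : MS ≠ 0 := hMS.ne'
      have h2 : c * (Vsafe (x, q) - εS) + c ^ 2 * MS ^ 2 / 8 = c * Vsafe (x, q) := by
        rw [hcdef]; field_simp; ring
      linarith
  -- conclusion
  refine ⟨πA, hπAmeas, hπΔ, ?_⟩
  intro x₀ hx₀
  by_cases hη0 : ηS = 0
  · simp [hη0]
  have hηneg : ηS < 0 := lt_of_le_of_ne hηS hη0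
  have hV0 : Vsafe (x₀, qinit) < 0 := (hb x₀ hx₀).trans_lt hηneg
  have hI0 := ha x₀ hx₀
  set Ev : ℕ → Set (ℕ → W) :=
    fun T => {ω | ∃ t ≤ T, 0 ≤ Vsafe (prodTraj F πA x₀ qinit ω t)} with hEvdef
  have hEvMeas : ∀ T, MeasurableSet (Ev T) := by
    intro T
    have hrw : Ev T = ⋃ t, ⋃ (_ : t ≤ T),
        {ω : ℕ → W | 0 ≤ Vsafe (prodTraj F πA x₀ qinit ω t)} := by
      ext ω; simp [hEvdef]
    rw [hrw]
    refine MeasurableSet.iUnion fun t => MeasurableSet.iUnion fun _ => ?_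
    exact measurableSet_le measurable_const (hVsafe.comp
      (ldbsm_prodTraj_measurable hF hπAmeas measurable_const qinit measurable_id t))
  have hBadMeas : MeasurableSet (⋃ T, Ev T) := MeasurableSet.iUnion hEvMeas
  have hBadBound : dInf (⋃ T, Ev T) ≤ ENNReal.ofReal (Real.exp (c * ηS)) := by
    have hdir : Directed (· ⊆ ·) Ev := by
      intro T1 T2
      refine ⟨max T1 T2, ?_, ?_⟩ <;>
        · intro ω hω
          simp only [hEvdef, Set.mem_setOf_eq] at hω ⊢
          obtain ⟨t, ht, h0⟩ := hω
          exact ⟨t, by omega, h0⟩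
    rw [Directed.measure_iUnion hdir]
    refine iSup_le fun T => (hmain T x₀ qinit hI0 hV0).trans ?_
    exact ENNReal.ofReal_le_ofReal (Real.exp_le_exp.2
      (mul_le_mul_of_nonneg_left (hb x₀ hx₀) hcpos.le))
  have hcompl : {ω : ℕ → W | ∀ t, Vsafe (prodTraj F πA x₀ qinit ω t) < 0} = (⋃ T, Ev T)ᶜ := by
    ext ω
    constructor
    · intro hgood hbad
      simp only [hEvdef, Set.mem_iUnion, Set.mem_setOf_eq] at hbad
      obtain ⟨T, t, ht, h0⟩ := hbad
      exact absurd h0 (not_le.2 (hgood t))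
    · intro hcl
      simp only [Set.mem_setOf_eq]
      intro t
      by_contra h0
      push_neg at h0
      exact hcl (Set.mem_iUnion.2 ⟨t, Set.mem_setOf_eq ▸ ⟨t, le_refl t, h0⟩⟩)
  rw [hcompl, prob_compl_eq_one_sub hBadMeas]
  have hce : c * ηS = 8 * ηS * εS / MS ^ 2 := by rw [hcdef]; ring
  rw [← hce]
  calc ENNReal.ofReal (1 - Real.exp (c * ηS))
      = 1 - ENNReal.ofReal (Real.exp (c * ηS)) := by
        rw [ENNReal.ofReal_sub 1 (Real.exp_pos _).le, ENNReal.ofReal_one]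
    _ ≤ 1 - dInf (⋃ T, Ev T) := tsub_le_tsub_left hBadBound 1
end

section
/- Almost-sure liveness-or-exit: assume the LDBSM conditions (a)–(f) hold. Then there exists an automaton-controller π^A such that for every x₀ ∈ Init, d^∞({ω : ℕ → W | (q_t ∈ Acc for infinitely many t) or (there exists t with V^safe(x_t, q_t) ≥ 0)}) = 1, where (x_t, q_t) is the product trajectory from (x₀, q_init) under π^A and ω. -/
open MeasureTheory

section LDBSMHelpers

open MeasureTheory

lemma ldbsm_measurable_proj' {W : Type*} [MeasurableSpace W] (t : ℕ) :
    Measurable (fun (ω : ℕ → W) (i : Fin t) => ω i.val) :=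
  measurable_pi_lambda _ fun i => measurable_pi_apply _

lemma ldbsm_map_proj_eq_pi {W : Type*} [MeasurableSpace W] (d : Measure W)
    [IsProbabilityMeasure d] (dInf : Measure (ℕ → W))
    (hdInf : ∀ (n : ℕ) (s : ℕ → Set W), (∀ i, MeasurableSet (s i)) →
      dInf {ω | ∀ i < n, ω i ∈ s i} = ∏ i ∈ Finset.range n, d (s i)) (t : ℕ) :
    Measure.map (fun (ω : ℕ → W) (i : Fin t) => ω i.val) dInf
      = Measure.pi (fun _ : Fin t => d) := by
  refine (Measure.pi_eq fun s hs => ?_).symm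
  rw [Measure.map_apply (ldbsm_measurable_proj' t) (MeasurableSet.univ_pi hs)]
  have hpre : (fun (ω : ℕ → W) (i : Fin t) => ω i.val) ⁻¹' (Set.univ.pi s)
      = {ω | ∀ i < t, ω i ∈ (fun i => if h : i < t then s ⟨i, h⟩ else Set.univ) i} := by
    ext ω
    simp only [Set.mem_preimage, Set.mem_pi, Set.mem_univ, forall_true_left, Set.mem_setOf_eq]
    constructor
    · intro h i hi; simpa [dif_pos hi] using h ⟨i, hi⟩
    · intro h i; have := h i.val i.isLt; simpa [dif_pos i.isLt] using this
  rw [hpre, hdInf t _ (fun i => by by_cases h : i < t <;> simp [h, hs])]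
  rw [← Fin.prod_univ_eq_prod_range (fun i => d (if h : i < t then s ⟨i, h⟩ else Set.univ)) t]
  exact (Finset.prod_congr rfl fun i _ => by simp [i.isLt]).symm

lemma ldbsm_lintegral_step {W : Type*} [MeasurableSpace W] (d : Measure W)
    [IsProbabilityMeasure d] (dInf : Measure (ℕ → W)) [IsProbabilityMeasure dInf]
    (hdInf : ∀ (n : ℕ) (s : ℕ → Set W), (∀ i, MeasurableSet (s i)) →
      dInf {ω | ∀ i < n, ω i ∈ s i} = ∏ i ∈ Finset.range n, d (s i))
    (t : ℕ) (h : (Fin t → W) × W → ENNReal) (hh : Measurable h) :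
    ∫⁻ ω, h (fun i : Fin t => ω i.val, ω t) ∂dInf
      = ∫⁻ p, ∫⁻ w, h (p, w) ∂d ∂(Measure.pi (fun _ : Fin t => d)) := by
  have hφ : Measurable (fun z : W × (Fin t → W) => h (z.2, z.1)) :=
    hh.comp (measurable_snd.prodMk measurable_fst)
  have hG : Measurable (fun f : Fin (t+1) → W =>
      h (fun i : Fin t => f i.castSucc, f (Fin.last t))) := by
    apply hh.comp
    exact (measurable_pi_lambda _ fun i => measurable_pi_apply _).prodMk (measurable_pi_apply _)
  have step1 : ∫⁻ ω, h (fun i : Fin t => ω i.val, ω t) ∂dInf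
      = ∫⁻ f, h (fun i : Fin t => f i.castSucc, f (Fin.last t))
          ∂(Measure.pi (fun _ : Fin (t+1) => d)) := by
    rw [← ldbsm_map_proj_eq_pi d dInf hdInf (t+1),
      lintegral_map hG (ldbsm_measurable_proj' (t+1))]
    rfl
  rw [step1]
  have mp := measurePreserving_piFinSuccAbove (fun _ : Fin (t+1) => d) (Fin.last t)
  have step2 : ∫⁻ f, h (fun i : Fin t => f i.castSucc, f (Fin.last t))
        ∂(Measure.pi (fun _ : Fin (t+1) => d))
      = ∫⁻ z, h (z.2, z.1) ∂(d.prod (Measure.pi (fun _ : Fin t => d))) := by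
    rw [← mp.lintegral_comp hφ]
    refine lintegral_congr fun f => ?_
    simp [MeasurableEquiv.piFinSuccAbove, Fin.succAbove_last]
    rfl
  rw [step2, lintegral_prod _ hφ.aemeasurable]
  exact lintegral_lintegral_swap (hh.comp (measurable_snd.prodMk measurable_fst)).aemeasurable

lemma ldbsm_measurable_from_finite {B Q' : Type*} [MeasurableSpace B] [Finite B]
    [MeasurableSingletonClass B] [MeasurableSpace Q'] [Countable Q'] (g : B → Q') :
    Measurable g := by
  apply measurable_to_countable'
  intro q
  have : g ⁻¹' {q} = ⋃ b ∈ g ⁻¹' {q}, {b} := by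
    ext b; simp
  rw [this]
  exact MeasurableSet.biUnion (Set.to_countable _) fun b _ => MeasurableSet.singleton b

lemma ldbsm_measurableSet_of_sections {X Q : Type*} [MeasurableSpace X] [MeasurableSpace Q]
    [Countable Q] [MeasurableSingletonClass Q]
    {S : Set (X × Q)} (h : ∀ q, MeasurableSet {x | (x, q) ∈ S}) : MeasurableSet S := by
  have : S = ⋃ q, {x | (x, q) ∈ S} ×ˢ ({q} : Set Q) := by
    ext ⟨x, q⟩
    constructor
    · intro hx
      exact Set.mem_iUnion.2 ⟨q, Set.mk_mem_prod hx rfl⟩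
    · intro hx
      obtain ⟨q', hq'⟩ := Set.mem_iUnion.1 hx
      obtain ⟨h1, h2⟩ := hq'
      simp only [Set.mem_singleton_iff] at h2
      subst h2; exact h1
  rw [this]
  exact MeasurableSet.iUnion fun q => (h q).prod (MeasurableSet.singleton q)

lemma ldbsm_measurable_decide {α : Type*} [MeasurableSpace α] {p : α → Prop} [DecidablePred p]
    (h : MeasurableSet {x | p x}) : Measurable fun x => decide (p x) := by
  apply measurable_to_countable'
  intro b
  cases b
  · convert h.compl using 1; ext x; simp
  · convert h using 1; ext x; simp

lemma ldbsm_exists_measurable_selection {α β : Type*} [MeasurableSpace α] [Fintype β]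
    [Nonempty β] [MeasurableSpace β] (P P₀ : α → β → Prop)
    (hP : ∀ q, MeasurableSet {x | P x q}) (hP₀ : ∀ q, MeasurableSet {x | P₀ x q})
    (hPP₀ : ∀ x q, P x q → P₀ x q) (hex : ∀ x, ∃ q, P₀ x q) :
    ∃ g : α → β, Measurable g ∧ (∀ x, P₀ x (g x)) ∧ ∀ x, (∃ q, P x q) → P x (g x) := by
  classical
  set n := Fintype.card β with hn
  set e : β ≃ Fin n := Fintype.equivFin β with he
  set decode : (Fin n → Bool) × (Fin n → Bool) → β := fun bc =>
    match (List.finRange n).find? bc.1 with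
    | some i => e.symm i
    | none =>
        match (List.finRange n).find? bc.2 with
        | some i => e.symm i
        | none => Classical.arbitrary β
    with hdecode
  set V : α → (Fin n → Bool) × (Fin n → Bool) := fun x =>
    (fun i => decide (P x (e.symm i)), fun i => decide (P₀ x (e.symm i))) with hV
  refine ⟨fun x => decode (V x), ?_, ?_, ?_⟩
  · exact (ldbsm_measurable_from_finite decode).comp
      ((measurable_pi_lambda _ fun i => ldbsm_measurable_decide (hP _)).prodMk
        (measurable_pi_lambda _ fun i => ldbsm_measurable_decide (hP₀ _)))
  · intro x
    obtain ⟨q, hq⟩ := hex x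
    rcases h1 : (List.finRange n).find? (V x).1 with _ | i
    · rcases h2 : (List.finRange n).find? (V x).2 with _ | i
      · exfalso
        have : ((List.finRange n).find? (V x).2).isSome :=
          List.find?_isSome.2 ⟨e q, List.mem_finRange _, by simp [hV, hq]⟩
        rw [h2] at this; simp at this
      · have := List.find?_some h2
        simp only [hV, decide_eq_true_eq] at this
        simpa [hdecode, h1, h2] using this
    · have := List.find?_some h1
      simp only [hV, decide_eq_true_eq] at this
      have h3 := hPP₀ _ _ this
      simpa [hdecode, h1] using h3
  · rintro x ⟨q, hq⟩
    have hsome : ((List.finRange n).find? (V x).1).isSome :=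
      List.find?_isSome.2 ⟨e q, List.mem_finRange _, by simp [hV, hq]⟩
    rcases h1 : (List.finRange n).find? (V x).1 with _ | i
    · rw [h1] at hsome; simp at hsome
    · have := List.find?_some h1
      simp only [hV, decide_eq_true_eq] at this
      simpa [hdecode, h1] using this

lemma ldbsm_ennreal_zero_of_forall_nsmul_le {a C : ENNReal} (hC : C ≠ ⊤)
    (h : ∀ j : ℕ, j • a ≤ C) : a = 0 := by
  by_contra ha
  have haT : a ≠ ⊤ := by
    intro h'
    have h1 := h 1
    rw [h', one_nsmul, top_le_iff] at h1
    exact hC h1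
  have hpos : 0 < a.toReal := ENNReal.toReal_pos ha haT
  obtain ⟨n, hn⟩ := exists_nat_gt (C.toReal / a.toReal)
  have h2 := h n
  rw [nsmul_eq_mul] at h2
  have h3 : ((n : ENNReal) * a).toReal ≤ C.toReal := ENNReal.toReal_mono hC h2
  rw [ENNReal.toReal_mul, ENNReal.toReal_natCast] at h3
  rw [div_lt_iff₀ hpos] at hn
  linarith

lemma ldbsm_nat_infinite_iff {S : Set ℕ} : S.Infinite ↔ ∀ N, ∃ t, N ≤ t ∧ t ∈ S := by
  constructor
  · intro h N
    by_contra hc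
    push_neg at hc
    exact h (Set.Finite.subset (Set.finite_Iio N) fun t ht => by
      by_contra hlt
      simp only [Set.mem_Iio, not_lt] at hlt
      exact hc t hlt ht)
  · intro h
    apply Set.infinite_of_not_bddAbove
    rintro ⟨b, hb⟩
    obtain ⟨t, hbt, htS⟩ := h (b + 1)
    have := hb htS
    omega

end LDBSMHelpers

theorem ldbsm_almost_sure_liveness_or_exit
    {X W Q A : Type*}
    [MeasurableSpace X] [MeasurableSpace W]
    [Fintype Q] [MeasurableSpace Q] [DiscreteMeasurableSpace Q]
    [Fintype A] [MeasurableSpace A] [DiscreteMeasurableSpace A]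
    (d : Measure W) [IsProbabilityMeasure d]
    (dInf : Measure (ℕ → W)) [IsProbabilityMeasure dInf]
    (hdInf : ∀ (n : ℕ) (s : ℕ → Set W), (∀ i, MeasurableSet (s i)) →
      dInf {ω | ∀ i < n, ω i ∈ s i} = ∏ i ∈ Finset.range n, d (s i))
    (F : X × W → X) (hF : Measurable F)
    (qinit : Q) (Δ : Q → A → Set Q) (hΔ : ∀ q σ, (Δ q σ).Nonempty)
    (Acc : Set Q)
    (L : X → A) (hL : Measurable L)
    (Init : Set X) (I : Set (X × Q)) (hI : MeasurableSet I)
    (Vsafe Vlive : X × Q → ℝ)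
    (hVsafe : Measurable Vsafe) (hVlive : Measurable Vlive)
    (hIntSafe : ∀ (x : X) (q' : Q), Integrable (fun w => Vsafe (F (x, w), q')) d)
    (hIntLive : ∀ (x : X) (q' : Q), Integrable (fun w => Vlive (F (x, w), q')) d)
    (ηS εS MS βS εL ML : ℝ)
    (hηS : ηS ≤ 0) (hεS : 0 < εS) (hMS : 0 < MS) (hεL : 0 < εL) (hML : 0 < ML)
    -- (a) Initial condition of the invariant
    (ha : ∀ x ∈ Init, (x, qinit) ∈ I)
    -- (b) Initial condition of the safety certificate
    (hb : ∀ x ∈ Init, Vsafe (x, qinit) ≤ ηS)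
    -- (c) Safety condition of the safety certificate
    (hc : ∀ x q, (x, q) ∈ I → q ∈ Qreject Δ Acc → 0 ≤ Vsafe (x, q))
    -- (d) Non-negativity condition of the liveness certificate
    (hd : ∀ x q, (x, q) ∈ I → 0 ≤ Vlive (x, q))
    -- (e) Strict expected decrease of the liveness certificate
    (he : ∀ x q, (x, q) ∈ I → q ∉ Acc ∪ Qreject Δ Acc → Vsafe (x, q) ≤ 0 →
      ∃ σ q', q' ∈ Δ q σ ∧ SafetyCond d F L I Vsafe εS MS βS x q σ q' ∧
        (∫ w, Vlive (F (x, w), q') ∂d) ≤ Vlive (x, q) - εL)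
    -- (f) Bounded expected increase of the liveness certificate
    (hf : ∀ x q, (x, q) ∈ I → q ∈ Acc → Vsafe (x, q) ≤ 0 →
      ∃ σ q', q' ∈ Δ q σ ∧ SafetyCond d F L I Vsafe εS MS βS x q σ q' ∧
        (∫ w, Vlive (F (x, w), q') ∂d) ≤ Vlive (x, q) + ML) :
    ∃ πA : X × Q → Q, Measurable πA ∧ (∀ x q, πA (x, q) ∈ Δ q (L x)) ∧
      ∀ x₀ ∈ Init,
        dInf {ω | {t | (prodTraj F πA x₀ qinit ω t).2 ∈ Acc}.Infinite ∨
          ∃ t, 0 ≤ Vsafe (prodTraj F πA x₀ qinit ω t)} = 1 := by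
  classical
  have hWne : Nonempty W := by
    by_contra hW
    rw [not_nonempty_iff] at hW
    have h1 : d Set.univ = 1 := measure_univ
    rw [Set.univ_eq_empty_iff.2 hW] at h1
    simp at h1
  obtain ⟨w₀⟩ := hWne
  have hQne : Nonempty Q := ⟨qinit⟩
  -- the measurable selection predicate
  set BigP : (X × Q) → Q → Prop := fun z q' =>
    q' ∈ Δ z.2 (L z.1) ∧ d {w | (F (z.1, w), q') ∈ I} = 1 ∧
      (∫ w, Vlive (F (z.1, w), q') ∂d) ≤ Vlive z + (if z.2 ∈ Acc then ML else -εL)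
    with hBigP
  have hBigPmeas : ∀ q', MeasurableSet {z : X × Q | BigP z q'} := by
    intro q'
    apply ldbsm_measurableSet_of_sections
    intro q
    have hm1 : MeasurableSet {x : X | q' ∈ Δ q (L x)} :=
      hL (DiscreteMeasurableSpace.forall_measurableSet {a : A | q' ∈ Δ q a})
    have hsF : MeasurableSet {xw : X × W | (F xw, q') ∈ I} := (hF.prodMk measurable_const) hI
    have hm2 : Measurable fun x : X => d (Prod.mk x ⁻¹' {xw : X × W | (F xw, q') ∈ I}) :=
      measurable_measure_prodMk_left hsF
    have hm2' : MeasurableSet {x : X | d {w | (F (x, w), q') ∈ I} = 1} :=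
      hm2 (measurableSet_singleton 1)
    have hm3 : StronglyMeasurable fun x : X => ∫ w, Vlive (F (x, w), q') ∂d := by
      have hj : StronglyMeasurable fun xw : X × W => Vlive (F xw, q') :=
        (hVlive.comp (hF.prodMk measurable_const)).stronglyMeasurable
      exact hj.integral_prod_right'
    have hm4 : MeasurableSet {x : X | (∫ w, Vlive (F (x, w), q') ∂d)
        ≤ Vlive (x, q) + (if q ∈ Acc then ML else -εL)} :=
      measurableSet_le hm3.measurable
        ((hVlive.comp (measurable_id.prodMk measurable_const)).add_const _)
    have hset : {x : X | (x, q) ∈ {z : X × Q | BigP z q'}}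
        = {x : X | q' ∈ Δ q (L x)} ∩ ({x : X | d {w | (F (x, w), q') ∈ I} = 1} ∩
            {x : X | (∫ w, Vlive (F (x, w), q') ∂d)
              ≤ Vlive (x, q) + (if q ∈ Acc then ML else -εL)}) := by
      ext x
      simp only [hBigP, Set.mem_setOf_eq, Set.mem_inter_iff]
    rw [hset]
    exact hm1.inter (hm2'.inter hm4)
  obtain ⟨π, hπmeas, hπ₀, hπsel⟩ :=
    ldbsm_exists_measurable_selection BigP (fun z q' => q' ∈ Δ z.2 (L z.1)) hBigPmeas
      (fun q' => ldbsm_measurableSet_of_sections fun q =>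
        hL (DiscreteMeasurableSpace.forall_measurableSet {a : A | q' ∈ Δ q a}))
      (fun z q' h => h.1) (fun z => hΔ z.2 (L z.1))
  -- the good region R
  set R : Set (X × Q) := {y | y ∈ I ∧ Vsafe y ≤ 0 ∧ y.2 ∉ Qreject Δ Acc} with hRdef
  have hRmeas : MeasurableSet R := by
    have : R = I ∩ (Vsafe ⁻¹' Set.Iic 0 ∩ Prod.snd ⁻¹' (Qreject Δ Acc)ᶜ) := by
      ext y
      simp only [hRdef, Set.mem_setOf_eq, Set.mem_inter_iff, Set.mem_preimage, Set.mem_Iic,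
        Set.mem_compl_iff]
    rw [this]
    exact hI.inter ((hVsafe measurableSet_Iic).inter
      (measurable_snd (DiscreteMeasurableSpace.forall_measurableSet _)))
  have hRkey : ∀ y ∈ R, BigP y (π y) := by
    intro y hy
    obtain ⟨hyI, hyV, hyQ⟩ := hy
    apply hπsel
    by_cases hyA : y.2 ∈ Acc
    · obtain ⟨σ, q', hq', hsafe, hlive⟩ := hf y.1 y.2 (by simpa using hyI) hyA hyV
      obtain ⟨hσ, hInv, _, _⟩ := hsafe
      refine ⟨q', ?_, ?_, ?_⟩
      · rw [hσ]; exact hq'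
      · have : {w | (F (y.1, w), q') ∈ I} = Set.univ := Set.eq_univ_of_forall hInv
        rw [this]; exact measure_univ
      · rw [if_pos hyA]; simpa using hlive
    · obtain ⟨σ, q', hq', hsafe, hlive⟩ := he y.1 y.2 (by simpa using hyI)
        (fun hmem => hmem.elim hyA hyQ) hyV
      obtain ⟨hσ, hInv, _, _⟩ := hsafe
      refine ⟨q', ?_, ?_, ?_⟩
      · rw [hσ]; exact hq'
      · have : {w | (F (y.1, w), q') ∈ I} = Set.univ := Set.eq_univ_of_forall hInv
        rw [this]; exact measure_univ
      · rw [if_neg hyA]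
        have : Vlive y + -εL = Vlive (y.1, y.2) - εL := by
          rw [Prod.mk.eta]; ring
        rw [this]; exact hlive
  refine ⟨π, hπmeas, fun x q => hπ₀ (x, q), ?_⟩
  intro x₀ hx₀
  -- trajectory
  set Z : ℕ → (ℕ → W) → X × Q := fun t ω => prodTraj F π x₀ qinit ω t with hZdef
  have hZ0 : ∀ ω, Z 0 ω = (x₀, qinit) := fun ω => rfl
  have hZs : ∀ t ω, Z (t+1) ω = (F ((Z t ω).1, ω t), π (Z t ω)) := fun t ω => rfl
  have hZmeas : ∀ t, Measurable (Z t) := by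
    intro t
    induction t with
    | zero =>
        have : Z 0 = fun _ => (x₀, qinit) := funext hZ0
        rw [this]; exact measurable_const
    | succ t ih =>
        have : Z (t+1) = fun ω => (F ((Z t ω).1, ω t), π (Z t ω)) := funext (hZs t)
        rw [this]
        exact (hF.comp ((measurable_fst.comp ih).prodMk (measurable_pi_apply t))).prodMk
          (hπmeas.comp ih)
  have hZdep : ∀ t (ω ω' : ℕ → W), (∀ i, i < t → ω i = ω' i) → Z t ω = Z t ω' := by
    intro t
    induction t with
    | zero => intro ω ω' _; rfl
    | succ t ih =>
        intro ω ω' hh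
        rw [hZs, hZs, ih ω ω' (fun i hi => hh i (Nat.lt_succ_of_lt hi)), hh t (Nat.lt_succ_self t)]
  set ex : ∀ t : ℕ, (Fin t → W) → ℕ → W :=
    fun t p i => if h : i < t then p ⟨i, h⟩ else w₀ with hexdef
  have hexmeas : ∀ t, Measurable (ex t) := by
    intro t
    apply measurable_pi_lambda
    intro i
    by_cases h : i < t
    · simp only [hexdef, dif_pos h]; exact measurable_pi_apply _
    · simp only [hexdef, dif_neg h]; exact measurable_const
  have hEA : ∀ t s (ω : ℕ → W), s ≤ t → Z s (ex t (fun i : Fin t => ω i.val)) = Z s ω := by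
    intro t s ω hs
    apply hZdep
    intro i hi
    simp only [hexdef]
    rw [dif_pos (lt_of_lt_of_le hi hs)]
  -- the supermartingale region sets
  set A : ℕ → ℕ → Set (ℕ → W) := fun N t =>
    {ω | (∀ s, s ≤ t → Z s ω ∈ R) ∧ ∀ s, N ≤ s → s ≤ t → (Z s ω).2 ∉ Acc} with hAdef
  have hAmeas : ∀ N t, MeasurableSet (A N t) := by
    intro N t
    have : A N t = (⋂ s, ⋂ (_ : s ≤ t), Z s ⁻¹' R) ∩
        (⋂ s, ⋂ (_ : N ≤ s), ⋂ (_ : s ≤ t), Z s ⁻¹' {y : X × Q | y.2 ∉ Acc}) := by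
      ext ω
      simp only [hAdef, Set.mem_setOf_eq, Set.mem_inter_iff, Set.mem_iInter, Set.mem_preimage]
    rw [this]
    refine MeasurableSet.inter ?_ ?_
    · exact MeasurableSet.iInter fun s => MeasurableSet.iInter fun _ => (hZmeas s) hRmeas
    · have hacc : MeasurableSet {y : X × Q | y.2 ∉ Acc} :=
        measurable_snd (DiscreteMeasurableSpace.forall_measurableSet Accᶜ)
      exact MeasurableSet.iInter fun s => MeasurableSet.iInter fun _ =>
        MeasurableSet.iInter fun _ => (hZmeas s) hacc
  have hAanti : ∀ N t, A N (t+1) ⊆ A N t := by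
    intro N t ω hω
    exact ⟨fun s hs => hω.1 s (le_trans hs (Nat.le_succ t)),
      fun s h1 h2 => hω.2 s h1 (le_trans h2 (Nat.le_succ t))⟩
  have hAiff : ∀ N t (ω : ℕ → W), ex t (fun i : Fin t => ω i.val) ∈ A N t ↔ ω ∈ A N t := by
    intro N t ω
    simp only [hAdef, Set.mem_setOf_eq]
    constructor
    · rintro ⟨h1, h2⟩
      exact ⟨fun s hs => by rw [← hEA t s ω hs]; exact h1 s hs,
             fun s hN hs => by rw [← hEA t s ω hs]; exact h2 s hN hs⟩
    · rintro ⟨h1, h2⟩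
      exact ⟨fun s hs => by rw [hEA t s ω hs]; exact h1 s hs,
             fun s hN hs => by rw [hEA t s ω hs]; exact h2 s hN hs⟩
  set Ap : ∀ (_ : ℕ) (t : ℕ), Set (Fin t → W) := fun N t => (ex t) ⁻¹' (A N t) with hApdef
  have hApmeas : ∀ N t, MeasurableSet (Ap N t) := fun N t => (hexmeas t) (hAmeas N t)
  have hAproj : ∀ N t, A N t = (fun (ω : ℕ → W) (i : Fin t) => ω i.val) ⁻¹' (Ap N t) := by
    intro N t
    ext ω
    simp only [Set.mem_preimage, hApdef]
    exact (hAiff N t ω).symm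
  have hdInfA : ∀ N t, dInf (A N t) = Measure.pi (fun _ : Fin t => d) (Ap N t) := by
    intro N t
    rw [hAproj N t, ← Measure.map_apply (ldbsm_measurable_proj' t) (hApmeas N t),
      ldbsm_map_proj_eq_pi d dInf hdInf t]
  -- the Lyapunov quantity
  set M : ℕ → ℕ → ENNReal := fun N t =>
    ∫⁻ ω, (if ω ∈ A N t then ENNReal.ofReal (Vlive (Z t ω)) else 0) ∂dInf with hMdef
  -- one-step expectation bound
  have hinner : ∀ y : X × Q, y ∈ R →
      (∫⁻ w, ENNReal.ofReal (Vlive (F (y.1, w), π y)) ∂d)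
          = ENNReal.ofReal (∫ w, Vlive (F (y.1, w), π y) ∂d) ∧
        0 ≤ (∫ w, Vlive (F (y.1, w), π y) ∂d) ∧
        (∫ w, Vlive (F (y.1, w), π y) ∂d) ≤ Vlive y + (if y.2 ∈ Acc then ML else -εL) := by
    intro y hy
    have hP := hRkey y hy
    have hsmeas : MeasurableSet {w | (F (y.1, w), π y) ∈ I} :=
      (((hF.comp (measurable_const.prodMk measurable_id)).prodMk measurable_const)) hI
    have hae : ∀ᵐ w ∂d, (F (y.1, w), π y) ∈ I := by
      rw [ae_iff]
      exact (prob_compl_eq_zero_iff hsmeas).2 hP.2.1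
    have hnn : 0 ≤ᶠ[ae d] fun w => Vlive (F (y.1, w), π y) :=
      hae.mono fun w hw => hd _ _ hw
    exact ⟨(ofReal_integral_eq_lintegral_ofReal (hIntLive y.1 (π y)) hnn).symm,
      integral_nonneg_of_ae hnn, hP.2.2⟩
  -- the main step inequality
  have hstep : ∀ N t,
      (M N (t+1) ≤ M N t + ENNReal.ofReal ML) ∧
      (N ≤ t → M N (t+1) + ENNReal.ofReal εL * dInf (A N t) ≤ M N t) := by
    intro N t
    have hzpmeas : Measurable fun p : Fin t → W => Z t (ex t p) := (hZmeas t).comp (hexmeas t)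
    set h : (Fin t → W) × W → ENNReal := fun pw =>
      if pw.1 ∈ Ap N t then
        ENNReal.ofReal (Vlive (F ((Z t (ex t pw.1)).1, pw.2), π (Z t (ex t pw.1)))) else 0
      with hhdef
    have hhmeas : Measurable h := by
      refine Measurable.ite (measurable_fst (hApmeas N t)) ?_ measurable_const
      exact ENNReal.measurable_ofReal.comp (hVlive.comp ((hF.comp
        ((measurable_fst.comp (hzpmeas.comp measurable_fst)).prodMk measurable_snd)).prodMk
        (hπmeas.comp (hzpmeas.comp measurable_fst))))
    have key1 : ∫⁻ ω, (if ω ∈ A N t then ENNReal.ofReal (Vlive (Z (t+1) ω)) else 0) ∂dInf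
        = ∫⁻ p, ∫⁻ w, h (p, w) ∂d ∂(Measure.pi (fun _ : Fin t => d)) := by
      rw [← ldbsm_lintegral_step d dInf hdInf t h hhmeas]
      refine lintegral_congr fun ω => ?_
      simp only [hhdef]
      have hm : (fun i : Fin t => ω i.val) ∈ Ap N t ↔ ω ∈ A N t := hAiff N t ω
      by_cases hmem : ω ∈ A N t
      · rw [if_pos hmem, if_pos (hm.2 hmem), hEA t t ω le_rfl, ← hZs]
      · rw [if_neg hmem, if_neg (fun c => hmem (hm.1 c))]
    have key0 : M N t = ∫⁻ p, (if p ∈ Ap N t then ENNReal.ofReal (Vlive (Z t (ex t p))) else 0)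
        ∂(Measure.pi (fun _ : Fin t => d)) := by
      set h0 : (Fin t → W) × W → ENNReal := fun pw =>
        if pw.1 ∈ Ap N t then ENNReal.ofReal (Vlive (Z t (ex t pw.1))) else 0 with hh0def
      have hh0meas : Measurable h0 :=
        Measurable.ite (measurable_fst (hApmeas N t))
          (ENNReal.measurable_ofReal.comp (hVlive.comp (hzpmeas.comp measurable_fst)))
          measurable_const
      calc M N t = ∫⁻ ω, h0 (fun i : Fin t => ω i.val, ω t) ∂dInf := by
            refine lintegral_congr fun ω => ?_
            simp only [hMdef, hh0def]
            have hm : (fun i : Fin t => ω i.val) ∈ Ap N t ↔ ω ∈ A N t := hAiff N t ω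
            by_cases hmem : ω ∈ A N t
            · rw [if_pos hmem, if_pos (hm.2 hmem), hEA t t ω le_rfl]
            · rw [if_neg hmem, if_neg (fun c => hmem (hm.1 c))]
        _ = ∫⁻ p, ∫⁻ w, h0 (p, w) ∂d ∂(Measure.pi (fun _ : Fin t => d)) :=
            ldbsm_lintegral_step d dInf hdInf t h0 hh0meas
        _ = ∫⁻ p, (if p ∈ Ap N t then ENNReal.ofReal (Vlive (Z t (ex t p))) else 0)
            ∂(Measure.pi (fun _ : Fin t => d)) := by
            refine lintegral_congr fun p => ?_
            simp only [hh0def]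
            split_ifs with hp <;> simp [lintegral_const]
    have hmono : M N (t+1) ≤ ∫⁻ p, ∫⁻ w, h (p, w) ∂d ∂(Measure.pi (fun _ : Fin t => d)) := by
      rw [← key1]
      refine lintegral_mono fun ω => ?_
      by_cases hmem : ω ∈ A N (t+1)
      · rw [if_pos hmem, if_pos (hAanti N t hmem)]
      · rw [if_neg hmem]; exact zero_le
    have hindmeas : Measurable fun p : Fin t → W =>
        (if p ∈ Ap N t then ENNReal.ofReal (Vlive (Z t (ex t p))) else 0) :=
      Measurable.ite (hApmeas N t)
        (ENNReal.measurable_ofReal.comp (hVlive.comp hzpmeas)) measurable_const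
    have hconst : ∀ c : ENNReal, ∫⁻ p, (if p ∈ Ap N t then c else 0)
        ∂(Measure.pi (fun _ : Fin t => d)) = c * Measure.pi (fun _ : Fin t => d) (Ap N t) := by
      intro c
      have hic : (fun p : Fin t → W => if p ∈ Ap N t then c else 0)
          = (Ap N t).indicator (fun _ => c) := by
        funext p
        by_cases hp : p ∈ Ap N t <;> simp [hp]
      rw [hic]
      exact lintegral_indicator_const (hApmeas N t) c
    have hindc : ∀ c : ENNReal,
        Measurable fun p : Fin t → W => (if p ∈ Ap N t then c else 0) := fun c =>
      Measurable.ite (p := fun p => p ∈ Ap N t) (hApmeas N t) measurable_const measurable_const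
    have hadd : ∀ (f : (Fin t → W) → ENNReal) (c : ENNReal),
        ∫⁻ p, (f p + if p ∈ Ap N t then c else 0) ∂(Measure.pi (fun _ : Fin t => d))
          = (∫⁻ p, f p ∂(Measure.pi (fun _ : Fin t => d)))
            + c * Measure.pi (fun _ : Fin t => d) (Ap N t) := by
      intro f c
      rw [lintegral_add_right _ (hindc c), hconst c]
    constructor
    · -- general increase bound
      have hb1 : ∫⁻ p, ∫⁻ w, h (p, w) ∂d ∂(Measure.pi (fun _ : Fin t => d))
          ≤ M N t + ENNReal.ofReal ML * Measure.pi (fun _ : Fin t => d) (Ap N t) := by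
        have hpt : ∀ p, (∫⁻ w, h (p, w) ∂d)
            ≤ (if p ∈ Ap N t then ENNReal.ofReal (Vlive (Z t (ex t p))) else 0)
              + (if p ∈ Ap N t then ENNReal.ofReal ML else 0) := by
          intro p
          by_cases hp : p ∈ Ap N t
          · simp only [hhdef, if_pos hp]
            have hmem : ex t p ∈ A N t := hp
            have hyR : Z t (ex t p) ∈ R := hmem.1 t le_rfl
            obtain ⟨heq, h0, hle⟩ := hinner (Z t (ex t p)) hyR
            rw [heq]
            calc ENNReal.ofReal (∫ w, Vlive (F ((Z t (ex t p)).1, w), π (Z t (ex t p))) ∂d)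
                ≤ ENNReal.ofReal (Vlive (Z t (ex t p)) + ML) := by
                  apply ENNReal.ofReal_le_ofReal
                  refine le_trans hle ?_
                  have : (if (Z t (ex t p)).2 ∈ Acc then ML else -εL) ≤ ML := by
                    split_ifs
                    · exact le_refl ML
                    · linarith
                  linarith
              _ ≤ ENNReal.ofReal (Vlive (Z t (ex t p))) + ENNReal.ofReal ML :=
                  ENNReal.ofReal_add_le
          · simp only [hhdef, if_neg hp]
            simp
        calc ∫⁻ p, ∫⁻ w, h (p, w) ∂d ∂(Measure.pi (fun _ : Fin t => d))
            ≤ ∫⁻ p, ((if p ∈ Ap N t then ENNReal.ofReal (Vlive (Z t (ex t p))) else 0)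
              + (if p ∈ Ap N t then ENNReal.ofReal ML else 0))
              ∂(Measure.pi (fun _ : Fin t => d)) := lintegral_mono hpt
          _ = (∫⁻ p, (if p ∈ Ap N t then ENNReal.ofReal (Vlive (Z t (ex t p))) else 0)
              ∂(Measure.pi (fun _ : Fin t => d)))
              + ENNReal.ofReal ML * Measure.pi (fun _ : Fin t => d) (Ap N t) :=
              hadd _ _
          _ = M N t + ENNReal.ofReal ML * Measure.pi (fun _ : Fin t => d) (Ap N t) := by
              rw [← key0]
      calc M N (t+1) ≤ M N t + ENNReal.ofReal ML * Measure.pi (fun _ : Fin t => d) (Ap N t) :=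
            le_trans hmono hb1
        _ ≤ M N t + ENNReal.ofReal ML * 1 := by
            gcongr
            exact prob_le_one
        _ = M N t + ENNReal.ofReal ML := by rw [mul_one]
    · -- strict decrease bound
      intro hNt
      have hpt : ∀ p, (∫⁻ w, h (p, w) ∂d) + (if p ∈ Ap N t then ENNReal.ofReal εL else 0)
          ≤ (if p ∈ Ap N t then ENNReal.ofReal (Vlive (Z t (ex t p))) else 0) := by
        intro p
        by_cases hp : p ∈ Ap N t
        · simp only [hhdef, if_pos hp]
          have hmem : ex t p ∈ A N t := hp
          have hyR : Z t (ex t p) ∈ R := hmem.1 t le_rfl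
          have hyA : (Z t (ex t p)).2 ∉ Acc := hmem.2 t hNt le_rfl
          obtain ⟨heq, h0, hle⟩ := hinner (Z t (ex t p)) hyR
          rw [heq, ← ENNReal.ofReal_add h0 (le_of_lt hεL)]
          apply ENNReal.ofReal_le_ofReal
          rw [if_neg hyA] at hle
          linarith
        · simp only [hhdef, if_neg hp]
          simp
      have hb2 : (∫⁻ p, ∫⁻ w, h (p, w) ∂d ∂(Measure.pi (fun _ : Fin t => d)))
          + ENNReal.ofReal εL * Measure.pi (fun _ : Fin t => d) (Ap N t) ≤ M N t := by
        calc (∫⁻ p, ∫⁻ w, h (p, w) ∂d ∂(Measure.pi (fun _ : Fin t => d)))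
            + ENNReal.ofReal εL * Measure.pi (fun _ : Fin t => d) (Ap N t)
            = ∫⁻ p, ((∫⁻ w, h (p, w) ∂d) + (if p ∈ Ap N t then ENNReal.ofReal εL else 0))
              ∂(Measure.pi (fun _ : Fin t => d)) := (hadd _ _).symm
          _ ≤ ∫⁻ p, (if p ∈ Ap N t then ENNReal.ofReal (Vlive (Z t (ex t p))) else 0)
              ∂(Measure.pi (fun _ : Fin t => d)) := lintegral_mono hpt
          _ = M N t := key0.symm
      calc M N (t+1) + ENNReal.ofReal εL * dInf (A N t)
          = M N (t+1) + ENNReal.ofReal εL * Measure.pi (fun _ : Fin t => d) (Ap N t) := by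
            rw [hdInfA N t]
        _ ≤ (∫⁻ p, ∫⁻ w, h (p, w) ∂d ∂(Measure.pi (fun _ : Fin t => d)))
            + ENNReal.ofReal εL * Measure.pi (fun _ : Fin t => d) (Ap N t) :=
            add_le_add hmono le_rfl
        _ ≤ M N t := hb2
  -- bound on M
  have hM0 : ∀ N, M N 0 ≤ ENNReal.ofReal (Vlive (x₀, qinit)) := by
    intro N
    calc M N 0 ≤ ∫⁻ _, ENNReal.ofReal (Vlive (x₀, qinit)) ∂dInf := by
          refine lintegral_mono fun ω => ?_
          by_cases hmem : ω ∈ A N 0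
          · rw [if_pos hmem, hZ0]
          · rw [if_neg hmem]; exact zero_le
      _ = ENNReal.ofReal (Vlive (x₀, qinit)) := by simp [lintegral_const]
  have hMbound : ∀ N t, M N t ≤ ENNReal.ofReal (Vlive (x₀, qinit)) + t * ENNReal.ofReal ML := by
    intro N t
    induction t with
    | zero => simpa using hM0 N
    | succ t ih =>
        calc M N (t+1) ≤ M N t + ENNReal.ofReal ML := (hstep N t).1
          _ ≤ ENNReal.ofReal (Vlive (x₀, qinit)) + t * ENNReal.ofReal ML + ENNReal.ofReal ML :=
              add_le_add ih le_rfl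
          _ = ENNReal.ofReal (Vlive (x₀, qinit)) + (t+1 : ℕ) * ENNReal.ofReal ML := by
              push_cast
              ring
  -- the intersection has measure zero
  have hDzero : ∀ N, dInf (⋂ t, A N t) = 0 := by
    intro N
    have hDle : ∀ t, dInf (⋂ t, A N t) ≤ dInf (A N t) :=
      fun t => measure_mono (Set.iInter_subset _ t)
    have hiter : ∀ j : ℕ, M N (N + j) + j • (ENNReal.ofReal εL * dInf (⋂ t, A N t)) ≤ M N N := by
      intro j
      induction j with
      | zero => simp
      | succ j ih =>
          have hstep' := (hstep N (N + j)).2 (Nat.le_add_right N j)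
          have hDle' : ENNReal.ofReal εL * dInf (⋂ t, A N t)
              ≤ ENNReal.ofReal εL * dInf (A N (N + j)) := mul_le_mul_right (hDle (N + j)) _
          calc M N (N + (j+1)) + (j + 1) • (ENNReal.ofReal εL * dInf (⋂ t, A N t))
              = (M N (N + j + 1) + ENNReal.ofReal εL * dInf (⋂ t, A N t))
                + j • (ENNReal.ofReal εL * dInf (⋂ t, A N t)) := by
                rw [succ_nsmul]
                rw [show N + (j+1) = N + j + 1 from rfl]
                ring
            _ ≤ (M N (N + j + 1) + ENNReal.ofReal εL * dInf (A N (N + j)))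
                + j • (ENNReal.ofReal εL * dInf (⋂ t, A N t)) :=
                add_le_add (add_le_add le_rfl hDle') le_rfl
            _ ≤ M N (N + j) + j • (ENNReal.ofReal εL * dInf (⋂ t, A N t)) :=
                add_le_add hstep' le_rfl
            _ ≤ M N N := ih
    have hC : (ENNReal.ofReal (Vlive (x₀, qinit)) + N * ENNReal.ofReal ML) ≠ ⊤ := by
      refine ENNReal.add_ne_top.2 ⟨ENNReal.ofReal_ne_top, ?_⟩
      exact ENNReal.mul_ne_top (ENNReal.natCast_ne_top N) ENNReal.ofReal_ne_top
    have hz : ENNReal.ofReal εL * dInf (⋂ t, A N t) = 0 := by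
      apply ldbsm_ennreal_zero_of_forall_nsmul_le hC
      intro j
      exact le_trans le_add_self (le_trans (hiter j) (hMbound N N))
    rcases mul_eq_zero.1 hz with h | h
    · exact absurd h (ENNReal.ofReal_pos.2 hεL).ne'
    · exact h
  -- the exceptional one-step null sets
  have hZT : ∀ t : ℕ, dInf {ω | Z t ω ∈ R ∧ (F ((Z t ω).1, ω t), π (Z t ω)) ∉ I} = 0 := by
    intro t
    have hzpmeas : Measurable fun p : Fin t → W => Z t (ex t p) := (hZmeas t).comp (hexmeas t)
    have hnext : Measurable fun ω : ℕ → W => (F ((Z t ω).1, ω t), π (Z t ω)) :=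
      (hF.comp ((measurable_fst.comp (hZmeas t)).prodMk (measurable_pi_apply t))).prodMk
        (hπmeas.comp (hZmeas t))
    have hZTmeas : MeasurableSet {ω : ℕ → W | Z t ω ∈ R ∧ (F ((Z t ω).1, ω t), π (Z t ω)) ∉ I} := by
      have : {ω : ℕ → W | Z t ω ∈ R ∧ (F ((Z t ω).1, ω t), π (Z t ω)) ∉ I}
          = Z t ⁻¹' R ∩ (fun ω : ℕ → W => (F ((Z t ω).1, ω t), π (Z t ω))) ⁻¹' Iᶜ := rfl
      rw [this]
      exact ((hZmeas t) hRmeas).inter (hnext hI.compl)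
    set h : (Fin t → W) × W → ENNReal := fun pw =>
      if (Z t (ex t pw.1) ∈ R ∧ (F ((Z t (ex t pw.1)).1, pw.2), π (Z t (ex t pw.1))) ∉ I)
        then 1 else 0 with hhdef
    have hhmeas : Measurable h := by
      refine Measurable.ite ?_ measurable_const measurable_const
      have h1 : MeasurableSet {pw : (Fin t → W) × W | Z t (ex t pw.1) ∈ R} :=
        (hzpmeas.comp measurable_fst) hRmeas
      have h2 : MeasurableSet {pw : (Fin t → W) × W |
          (F ((Z t (ex t pw.1)).1, pw.2), π (Z t (ex t pw.1))) ∈ I} :=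
        ((hF.comp ((measurable_fst.comp (hzpmeas.comp measurable_fst)).prodMk
          measurable_snd)).prodMk (hπmeas.comp (hzpmeas.comp measurable_fst))) hI
      exact h1.inter h2.compl
    have e1 : dInf {ω | Z t ω ∈ R ∧ (F ((Z t ω).1, ω t), π (Z t ω)) ∉ I}
        = ∫⁻ ω, ({ω : ℕ → W | Z t ω ∈ R ∧ (F ((Z t ω).1, ω t), π (Z t ω)) ∉ I}.indicator 1) ω
          ∂dInf := (lintegral_indicator_one hZTmeas).symm
    have e2 : ∫⁻ ω, ({ω : ℕ → W | Z t ω ∈ R ∧ (F ((Z t ω).1, ω t), π (Z t ω)) ∉ I}.indicator 1) ω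
        ∂dInf = ∫⁻ p, ∫⁻ w, h (p, w) ∂d ∂(Measure.pi (fun _ : Fin t => d)) := by
      rw [← ldbsm_lintegral_step d dInf hdInf t h hhmeas]
      refine lintegral_congr fun ω => ?_
      simp only [hhdef, Set.indicator_apply, Set.mem_setOf_eq, Pi.one_apply]
      rw [hEA t t ω le_rfl]
    have e3 : ∀ p : Fin t → W, ∫⁻ w, h (p, w) ∂d = 0 := by
      intro p
      by_cases hp : Z t (ex t p) ∈ R
      · have hkey := hRkey _ hp
        have hsm : MeasurableSet {w | (F ((Z t (ex t p)).1, w), π (Z t (ex t p))) ∈ I} :=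
          (((hF.comp (measurable_const.prodMk measurable_id)).prodMk measurable_const)) hI
        have heq : ∫⁻ w, h (p, w) ∂d = ∫⁻ w,
            (({w | (F ((Z t (ex t p)).1, w), π (Z t (ex t p))) ∈ I}ᶜ).indicator 1) w ∂d := by
          refine lintegral_congr fun w => ?_
          simp only [hhdef, Set.indicator_apply, Set.mem_compl_iff, Set.mem_setOf_eq, Pi.one_apply]
          by_cases hw : (F ((Z t (ex t p)).1, w), π (Z t (ex t p))) ∈ I
          · rw [if_neg (fun c => c.2 hw), if_neg (not_not.2 hw)]
          · rw [if_pos ⟨hp, hw⟩, if_pos hw]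
        rw [heq, lintegral_indicator_one hsm.compl]
        exact (prob_compl_eq_zero_iff hsm).2 hkey.2.1
      · have hzero : ∀ w, h (p, w) = 0 := fun w => if_neg (fun c => hp c.1)
        simp [hzero]
    rw [e1, e2]
    simp [e3]
  -- the bad events are null
  have hBad : ∀ N, dInf {ω | (∀ t, Vsafe (Z t ω) < 0) ∧ ∀ t, N ≤ t → (Z t ω).2 ∉ Acc} = 0 := by
    intro N
    refine measure_mono_null (t := (⋂ t, A N t) ∪
      ⋃ t, {ω | Z t ω ∈ R ∧ (F ((Z t ω).1, ω t), π (Z t ω)) ∉ I}) ?_ ?_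
    · intro ω hω
      obtain ⟨hωV, hωA⟩ := hω
      by_cases hZmem : ω ∈ ⋃ t, {ω | Z t ω ∈ R ∧ (F ((Z t ω).1, ω t), π (Z t ω)) ∉ I}
      · exact Or.inr hZmem
      · left
        rw [Set.mem_iUnion] at hZmem
        push_neg at hZmem
        have hRall : ∀ s, Z s ω ∈ R := by
          intro s
          induction s with
          | zero =>
              refine ⟨?_, le_of_lt (hωV 0), ?_⟩
              · rw [hZ0]; exact ha x₀ hx₀
              · intro hq
                have h0 : ((Z 0 ω).1, (Z 0 ω).2) ∈ I := by
                  rw [Prod.mk.eta, hZ0]; exact ha x₀ hx₀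
                have hcc := hc (Z 0 ω).1 (Z 0 ω).2 h0 hq
                rw [Prod.mk.eta] at hcc
                exact absurd hcc (not_le.2 (hωV 0))
          | succ s ih =>
              have hnI : Z (s+1) ω ∈ I := by
                have hns := hZmem s
                rw [Set.mem_setOf_eq] at hns
                by_contra hno
                rw [hZs] at hno
                exact hns ⟨ih, hno⟩
              refine ⟨hnI, le_of_lt (hωV (s+1)), ?_⟩
              intro hq
              have hcc := hc (Z (s+1) ω).1 (Z (s+1) ω).2 (by rw [Prod.mk.eta]; exact hnI) hq
              rw [Prod.mk.eta] at hcc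
              exact absurd hcc (not_le.2 (hωV (s+1)))
        exact Set.mem_iInter.2 fun t => ⟨fun s _ => hRall s, fun s hN _ => hωA s hN⟩
    · exact measure_union_null (hDzero N) (measure_iUnion_null hZT)
  -- measurability of the target event
  have hEmeas : MeasurableSet {ω : ℕ → W |
      {t | (Z t ω).2 ∈ Acc}.Infinite ∨ ∃ t, 0 ≤ Vsafe (Z t ω)} := by
    have hE1 : {ω : ℕ → W | {t | (Z t ω).2 ∈ Acc}.Infinite}
        = ⋂ N, ⋃ t, {ω | N ≤ t ∧ (Z t ω).2 ∈ Acc} := by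
      ext ω
      simp only [Set.mem_setOf_eq, Set.mem_iInter, Set.mem_iUnion]
      rw [ldbsm_nat_infinite_iff]
      constructor
      · intro h N; obtain ⟨t, h1, h2⟩ := h N; exact ⟨t, h1, h2⟩
      · intro h N; obtain ⟨t, h1, h2⟩ := h N; exact ⟨t, h1, h2⟩
    have hsplit : {ω : ℕ → W | {t | (Z t ω).2 ∈ Acc}.Infinite ∨ ∃ t, 0 ≤ Vsafe (Z t ω)}
        = {ω : ℕ → W | {t | (Z t ω).2 ∈ Acc}.Infinite}
          ∪ ⋃ t, {ω : ℕ → W | 0 ≤ Vsafe (Z t ω)} := by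
      ext ω
      simp only [Set.mem_setOf_eq, Set.mem_union, Set.mem_iUnion]
    rw [hsplit, hE1]
    refine MeasurableSet.union ?_
      (MeasurableSet.iUnion fun t => (hZmeas t) (hVsafe measurableSet_Ici))
    refine MeasurableSet.iInter fun N => MeasurableSet.iUnion fun t => ?_
    by_cases h : N ≤ t
    · have : {ω : ℕ → W | N ≤ t ∧ (Z t ω).2 ∈ Acc} = Z t ⁻¹' {y : X × Q | y.2 ∈ Acc} := by
        ext ω; simp [h]
      rw [this]
      exact (hZmeas t) (measurable_snd (DiscreteMeasurableSpace.forall_measurableSet _))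
    · have : {ω : ℕ → W | N ≤ t ∧ (Z t ω).2 ∈ Acc} = ∅ := by
        ext ω; simp [h]
      rw [this]
      exact MeasurableSet.empty
  -- conclusion
  show dInf {ω | {t | (Z t ω).2 ∈ Acc}.Infinite ∨ ∃ t, 0 ≤ Vsafe (Z t ω)} = 1
  refine (prob_compl_eq_zero_iff hEmeas).1 ?_
  refine measure_mono_null (t := ⋃ N,
    {ω | (∀ t, Vsafe (Z t ω) < 0) ∧ ∀ t, N ≤ t → (Z t ω).2 ∉ Acc}) ?_ (measure_iUnion_null hBad)
  intro ω hω
  simp only [Set.mem_compl_iff, Set.mem_setOf_eq] at hω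
  push_neg at hω
  obtain ⟨hfin, hno⟩ := hω
  obtain ⟨b, hb⟩ := hfin.bddAbove
  refine Set.mem_iUnion.2 ⟨b + 1, hno, fun t ht hAcc => ?_⟩
  have := hb hAcc
  omega
end
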